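/- arXiv:2110.15936 — 5 statements merged into one kernel-verified Lean document; each statement's English description precedes it below -/
import Mathlib

section
/- Let $\mathscr{S}$ be a $\frac{1}{\tau}$-sparse family of sets, let $1 < p < \infty$, and let $\Psi$ be a Young function such that the associated Orlicz maximal operator $M_\Psi f := \sup_{Q \in \mathscr{S}} \langle |f| \rangle_{\Psi,Q} \mathbf{1}_Q$ is bounded on $L^p$ with norm $N$. Then for any weight $w$ and any $G \in \mathscr{S}$, $\sum_{Q \in \mathscr{S},\, Q \subseteq G} \langle w^{1/p} \rangle_{\Psi,Q}^p\, |Q| \le \tau N^p\, w(G)$. -/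
open MeasureTheory ENNReal Set Filter

/-- A Young function: continuous, convex, strictly increasing (on the finite part),
vanishing at `0`, and superlinear at infinity. -/
def IsYoung (Φ : ℝ≥0∞ → ℝ≥0∞) : Prop :=
  Φ 0 = 0 ∧ Continuous Φ ∧ StrictMonoOn Φ {t : ℝ≥0∞ | t < ∞} ∧
  (∀ a b t : ℝ≥0∞, t ≤ 1 → Φ (t * a + (1 - t) * b) ≤ t * Φ a + (1 - t) * Φ b) ∧
  Tendsto (fun t => Φ t / t) atTop atTop

/-- The Luxembourg (Orlicz) average of `f` over `Q`. -/
noncomputable def luxAvg {X : Type*} [MeasurableSpace X] (μ : Measure X) (Q : Set X)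
    (Φ : ℝ≥0∞ → ℝ≥0∞) (f : X → ℝ≥0∞) : ℝ≥0∞ :=
  sInf {lam : ℝ≥0∞ | 0 < lam ∧ (∫⁻ x in Q, Φ (f x / lam) ∂μ) / μ Q ≤ 1}

/-- The Orlicz maximal operator associated to the family `S`. -/
noncomputable def orliczMax {X ι : Type*} [MeasurableSpace X] (μ : Measure X)
    (S : ι → Set X) (Φ : ℝ≥0∞ → ℝ≥0∞) (f : X → ℝ≥0∞) (x : X) : ℝ≥0∞ :=
  ⨆ i, Set.indicator (S i) (fun _ => luxAvg μ (S i) Φ f) x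

/-- If the Orlicz maximal operator `M_Ψ` is bounded on `L^p` with norm `N`, then for any
weight `w` and any `G` in the sparse family, `∑_{Q ⊆ G} ⟨w^{1/p}⟩_{Ψ,Q}^p |Q| ≤ τ N^p w(G)`. -/
theorem stmt2 {X ι : Type*} [MeasurableSpace X] [Countable ι] (μ : Measure X)
    (S E : ι → Set X) (τ : ℝ≥0∞) (hτ : 1 ≤ τ) (hτ' : τ ≠ ∞)
    (hSmeas : ∀ i, MeasurableSet (S i)) (hEmeas : ∀ i, MeasurableSet (E i))
    (hsub : ∀ i, E i ⊆ S i)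
    (hvol : ∀ i, 0 < μ (S i) ∧ μ (S i) < ∞)
    (hsparse : ∀ i, μ (S i) ≤ τ * μ (E i))
    (hdisj : Pairwise (Function.onFun Disjoint E))
    (p : ℝ) (hp : 1 < p)
    (Ψ : ℝ≥0∞ → ℝ≥0∞) (hΨ : IsYoung Ψ)
    (N : ℝ≥0∞)
    (hbound : ∀ g : X → ℝ≥0∞, Measurable g →
      (∫⁻ x, (orliczMax μ S Ψ g x) ^ p ∂μ) ^ (1 / p) ≤ N * (∫⁻ x, g x ^ p ∂μ) ^ (1 / p))
    (w : X → ℝ≥0∞) (hw : Measurable w) (i₀ : ι) :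
    ∑' i : {i // S i ⊆ S i₀},
        (luxAvg μ (S i.1) Ψ (fun x => w x ^ (1 / p))) ^ p * μ (S i.1) ≤
      τ * N ^ p * ∫⁻ x in S i₀, w x ∂μ := by
  have hp0 : (0:ℝ) < p := lt_trans one_pos hp
  set f : X → ℝ≥0∞ := fun x => w x ^ (1 / p) with hf
  set g : X → ℝ≥0∞ := (S i₀).indicator f with hgdef
  have hfm : Measurable f := hw.pow_const _
  have hg : Measurable g := hfm.indicator (hSmeas i₀)
  -- luxAvg over a subset of S i₀ is the same for f and g
  have hlux : ∀ i, S i ⊆ S i₀ → luxAvg μ (S i) Ψ f = luxAvg μ (S i) Ψ g := by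
    intro i hi
    unfold luxAvg
    congr 1
    ext lam
    have : (∫⁻ x in S i, Ψ (f x / lam) ∂μ) = ∫⁻ x in S i, Ψ (g x / lam) ∂μ := by
      refine setLIntegral_congr_fun (hSmeas i) (fun x hx => ?_)
      rw [hgdef, Set.indicator_of_mem (hi hx)]
    simp [this]
  -- Mg measurable
  have hMg : Measurable (orliczMax μ S Ψ g) := by
    apply Measurable.iSup
    intro i
    exact measurable_const.indicator (hSmeas i)
  -- pointwise bound on E i
  have hpt : ∀ (i : {i // S i ⊆ S i₀}) (x : X), x ∈ E i.1 →
      (luxAvg μ (S i.1) Ψ f) ^ p ≤ (orliczMax μ S Ψ g x) ^ p := by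
    intro i x hx
    refine ENNReal.rpow_le_rpow ?_ hp0.le
    rw [hlux i.1 i.2]
    have := le_iSup (fun j => Set.indicator (S j) (fun _ => luxAvg μ (S j) Ψ g) x) i.1
    rwa [Set.indicator_of_mem (hsub i.1 hx)] at this
  -- per-index bound
  have hstep : ∀ i : {i // S i ⊆ S i₀},
      (luxAvg μ (S i.1) Ψ f) ^ p * μ (S i.1) ≤
        τ * ∫⁻ x in E i.1, (orliczMax μ S Ψ g x) ^ p ∂μ := by
    intro i
    calc (luxAvg μ (S i.1) Ψ f) ^ p * μ (S i.1)
        ≤ (luxAvg μ (S i.1) Ψ f) ^ p * (τ * μ (E i.1)) :=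
          mul_le_mul_right (hsparse i.1) _
      _ = τ * ((luxAvg μ (S i.1) Ψ f) ^ p * μ (E i.1)) := by ring
      _ ≤ τ * ∫⁻ x in E i.1, (orliczMax μ S Ψ g x) ^ p ∂μ := by
          refine mul_le_mul_right ?_ τ
          rw [← setLIntegral_const (E i.1) _]
          exact setLIntegral_mono (hMg.pow_const p) fun x hx => hpt i x hx
  -- L^p bound after raising to p
  have hLp : (∫⁻ x, (orliczMax μ S Ψ g x) ^ p ∂μ) ≤ N ^ p * ∫⁻ x, g x ^ p ∂μ := by
    have h := hbound g hg
    have h2 := ENNReal.rpow_le_rpow h hp0.le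
    rwa [← ENNReal.rpow_mul, one_div_mul_cancel hp0.ne', ENNReal.rpow_one,
      ENNReal.mul_rpow_of_nonneg _ _ hp0.le, ← ENNReal.rpow_mul,
      one_div_mul_cancel hp0.ne', ENNReal.rpow_one] at h2
  have hgw : (∫⁻ x, g x ^ p ∂μ) = ∫⁻ x in S i₀, w x ∂μ := by
    rw [← lintegral_indicator (hSmeas i₀)]
    refine lintegral_congr fun x => ?_
    by_cases hx : x ∈ S i₀
    · rw [hgdef, Set.indicator_of_mem hx, Set.indicator_of_mem hx, hf]
      simp only []
      rw [← ENNReal.rpow_mul, one_div_mul_cancel hp0.ne', ENNReal.rpow_one]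
    · rw [hgdef, Set.indicator_of_notMem hx, Set.indicator_of_notMem hx,
        ENNReal.zero_rpow_of_pos hp0]
  calc ∑' i : {i // S i ⊆ S i₀}, (luxAvg μ (S i.1) Ψ f) ^ p * μ (S i.1)
      ≤ ∑' i : {i // S i ⊆ S i₀}, τ * ∫⁻ x in E i.1, (orliczMax μ S Ψ g x) ^ p ∂μ :=
        ENNReal.tsum_le_tsum hstep
    _ = τ * ∑' i : {i // S i ⊆ S i₀}, ∫⁻ x in E i.1, (orliczMax μ S Ψ g x) ^ p ∂μ :=
        ENNReal.tsum_mul_left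
    _ = τ * ∫⁻ x in ⋃ i : {i // S i ⊆ S i₀}, E i.1, (orliczMax μ S Ψ g x) ^ p ∂μ := by
        rw [lintegral_iUnion (fun i => hEmeas i.1)
          (fun i j hij => hdisj (Subtype.coe_injective.ne hij)) _]
    _ ≤ τ * ∫⁻ x, (orliczMax μ S Ψ g x) ^ p ∂μ :=
        mul_le_mul_right (setLIntegral_le_lintegral _ _) τ
    _ ≤ τ * (N ^ p * ∫⁻ x, g x ^ p ∂μ) := mul_le_mul_right hLp τ
    _ = τ * N ^ p * ∫⁻ x in S i₀, w x ∂μ := by rw [hgw, mul_assoc]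
end

section
/- Let $1 < p < \infty$ and let $w$ be a weight with finite dyadic Békollé–Bonamí characteristic $[w]_{B_p} := \sup_{Q \in \mathscr{D}} \langle w \rangle_Q \langle w^{1-p'} \rangle_Q^{p-1} < \infty$, where $\mathscr{D}$ is a dyadic lattice. Assume the sharp Buckley bound $\lVert M \rVert_{L^{p'}(\sigma) \to L^{p'}(\sigma)} \le C_{p,d} [\sigma]_{B_{p'}}^{1/(p'-1)}$ for the dyadic maximal function $M$ and the dual weight $\sigma := w^{1-p'}$. Then the Fujii–Wilson characteristic satisfies $[w]_{B_\infty} := \sup_{Q \in \mathscr{D}} \frac{1}{w(Q)} \int_Q M(w \mathbf{1}_Q) \le C_{p,d}\, [w]_{B_p}$. -/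
open MeasureTheory ENNReal Set

/-- Average of `f` over `Q`. -/
noncomputable def avg {X : Type*} [MeasurableSpace X] (μ : Measure X) (Q : Set X)
    (f : X → ℝ≥0∞) : ℝ≥0∞ := (∫⁻ x in Q, f x ∂μ) / μ Q

/-- The dyadic maximal function over the lattice `D`. -/
noncomputable def maxD {X ι : Type*} [MeasurableSpace X] (μ : Measure X)
    (D : ι → Set X) (f : X → ℝ≥0∞) (x : X) : ℝ≥0∞ :=
  ⨆ i, Set.indicator (D i) (fun _ => avg μ (D i) f) x

/-- `[w]_{B_∞} ≤ C_{p,d} [w]_{B_p}`, given Buckley's sharp bound for the dyadic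
maximal function with respect to the dual weight `σ = w^{1-p'}`. -/
theorem stmt6 {X ι : Type*} [MeasurableSpace X] (μ : Measure X)
    (D : ι → Set X) (hDmeas : ∀ i, MeasurableSet (D i))
    (hdyadic : ∀ i j, D i ⊆ D j ∨ D j ⊆ D i ∨ Disjoint (D i) (D j))
    (hvol : ∀ i, 0 < μ (D i) ∧ μ (D i) < ∞)
    (p : ℝ) (hp : 1 < p)
    (w : X → ℝ≥0∞) (hw : Measurable w) (hwpos : ∀ x, 0 < w x) (hwfin : ∀ x, w x < ∞)
    (σ : X → ℝ≥0∞) (hσ : σ = fun x => w x ^ (1 - p / (p - 1)))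
    (Bp : ℝ≥0∞)
    (hBpdef : Bp = ⨆ i, avg μ (D i) w * (avg μ (D i) σ) ^ (p - 1))
    (hBpfin : Bp ≠ ∞)
    (Bσ : ℝ≥0∞)
    (hBσdef : Bσ = ⨆ i, avg μ (D i) σ * (avg μ (D i) w) ^ (p / (p - 1) - 1))
    (C : ℝ≥0∞) (hC : C ≠ ∞)
    (hBuckley : ∀ f : X → ℝ≥0∞, Measurable f →
      (∫⁻ x, (maxD μ D f x) ^ (p / (p - 1)) * σ x ∂μ) ^ (1 / (p / (p - 1))) ≤
        C * Bσ ^ (1 / (p / (p - 1) - 1)) *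
          (∫⁻ x, f x ^ (p / (p - 1)) * σ x ∂μ) ^ (1 / (p / (p - 1)))) :
    (⨆ i, (∫⁻ x in D i, maxD μ D (Set.indicator (D i) w) x ∂μ) /
        ∫⁻ x in D i, w x ∂μ) ≤ C * Bp := by
  set q : ℝ := p / (p - 1) with hqdef
  have hp1 : (0:ℝ) < p - 1 := by linarith
  have hp0 : (0:ℝ) < p := by linarith
  have hq1 : 1 < q := by
    rw [hqdef, lt_div_iff₀ hp1]; linarith
  have hq0 : (0:ℝ) < q := lt_trans one_pos hq1
  have hqm1 : (0:ℝ) < q - 1 := by linarith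
  have hconj : q.HolderConjugate p := by
    rw [Real.holderConjugate_iff]
    constructor
    · exact hq1
    · rw [hqdef]; field_simp; ring
  -- pointwise facts about σ
  have hσeval : ∀ x, σ x = w x ^ (1 - q) := fun x => by rw [hσ]
  have hσ0 : ∀ x, σ x ≠ 0 := fun x => by
    rw [hσeval]
    exact (ENNReal.rpow_pos (hwpos x) (hwfin x).ne).ne'
  have hσtop : ∀ x, σ x ≠ ∞ := fun x => by
    rw [hσeval]
    intro h
    rcases ENNReal.rpow_eq_top_iff.1 h with ⟨h0, _⟩ | ⟨ht, _⟩
    · exact (hwpos x).ne' h0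
    · exact (hwfin x).ne ht
  have hσmeas : Measurable σ := by
    rw [hσ]; exact hw.pow_const _
  -- `Bσ ^ (1/(q-1)) ≤ Bp`
  have hexp1 : (p - 1) * (q - 1) = 1 := by
    rw [hqdef]; field_simp; ring
  have hBσBp : Bσ ^ (1 / (q - 1)) ≤ Bp := by
    have h1 : Bσ ≤ Bp ^ (q - 1) := by
      rw [hBσdef]
      refine iSup_le fun i => ?_
      have hterm : avg μ (D i) w * (avg μ (D i) σ) ^ (p - 1) ≤ Bp := by
        rw [hBpdef]
        exact le_iSup (fun j => avg μ (D j) w * avg μ (D j) σ ^ (p - 1)) i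
      have heq : avg μ (D i) σ * avg μ (D i) w ^ (q - 1)
          = (avg μ (D i) w * avg μ (D i) σ ^ (p - 1)) ^ (q - 1) := by
        rw [ENNReal.mul_rpow_of_nonneg _ _ hqm1.le, ← ENNReal.rpow_mul, hexp1,
          ENNReal.rpow_one, mul_comm]
      rw [heq]
      exact ENNReal.rpow_le_rpow hterm hqm1.le
    calc Bσ ^ (1 / (q - 1)) ≤ (Bp ^ (q - 1)) ^ (1 / (q - 1)) :=
          ENNReal.rpow_le_rpow h1 (by positivity)
      _ = Bp := by
          rw [← ENNReal.rpow_mul, mul_one_div, div_self hqm1.ne', ENNReal.rpow_one]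
  refine iSup_le fun i => ?_
  set Q : Set X := D i with hQ
  set W : ℝ≥0∞ := ∫⁻ x in Q, w x ∂μ with hW
  by_cases hWtop : W = ∞
  · rw [hWtop, ENNReal.div_top]; exact zero_le
  have hWpos : 0 < W := by
    rw [hW, lintegral_pos_iff_support hw]
    have hsupp : Function.support w = univ := eq_univ_of_forall fun x => (hwpos x).ne'
    rw [hsupp, Measure.restrict_apply_univ]
    exact (hvol i).1
  set f : X → ℝ≥0∞ := Set.indicator Q w with hf
  have hfmeas : Measurable f := hw.indicator (hDmeas i)
  -- measurable minorant of the maximal function on Q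
  obtain ⟨g, hgmeas, hgle, hgint⟩ :=
    exists_measurable_le_lintegral_eq (μ.restrict Q) (maxD μ D f)
  -- Hölder
  have hFmeas : Measurable fun x => g x * σ x ^ (1 / q) :=
    hgmeas.mul (hσmeas.pow_const _)
  have hGmeas : Measurable fun x => σ x ^ (-(1 / q)) := hσmeas.pow_const _
  have holder0 := ENNReal.lintegral_mul_le_Lp_mul_Lq (μ.restrict Q) hconj
    hFmeas.aemeasurable hGmeas.aemeasurable
  have hFG : ∀ x, ((fun x => g x * σ x ^ (1 / q)) * fun x => σ x ^ (-(1 / q))) x = g x := by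
    intro x
    simp only [Pi.mul_apply]
    rw [mul_assoc, ← ENNReal.rpow_add _ _ (hσ0 x) (hσtop x), add_neg_cancel,
      ENNReal.rpow_zero, mul_one]
  have hFq : ∀ x, (g x * σ x ^ (1 / q)) ^ q = g x ^ q * σ x := by
    intro x
    rw [ENNReal.mul_rpow_of_nonneg _ _ hq0.le, ← ENNReal.rpow_mul,
      one_div_mul_cancel hq0.ne', ENNReal.rpow_one]
  have hGp : ∀ x, (σ x ^ (-(1 / q))) ^ p = w x := by
    intro x
    rw [hσeval, ← ENNReal.rpow_mul, ← ENNReal.rpow_mul]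
    have : (1 - q) * (-(1 / q) * p) = 1 := by
      rw [hqdef]; field_simp; ring
    rw [this, ENNReal.rpow_one]
  have holder : ∫⁻ x in Q, g x ∂μ ≤
      (∫⁻ x in Q, g x ^ q * σ x ∂μ) ^ (1 / q) * W ^ (1 / p) := by
    calc ∫⁻ x in Q, g x ∂μ
        = ∫⁻ x in Q, ((fun x => g x * σ x ^ (1 / q)) * fun x => σ x ^ (-(1 / q))) x ∂μ :=
          (lintegral_congr hFG).symm
      _ ≤ (∫⁻ x in Q, (g x * σ x ^ (1 / q)) ^ q ∂μ) ^ (1 / q) *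
            (∫⁻ x in Q, (σ x ^ (-(1 / q))) ^ p ∂μ) ^ (1 / p) := holder0
      _ = (∫⁻ x in Q, g x ^ q * σ x ∂μ) ^ (1 / q) * W ^ (1 / p) := by
          rw [lintegral_congr hFq, lintegral_congr hGp]
  -- the g-integral is dominated by the full maximal-function integral
  have hdom : (∫⁻ x in Q, g x ^ q * σ x ∂μ) ≤ ∫⁻ x, (maxD μ D f x) ^ q * σ x ∂μ := by
    calc ∫⁻ x in Q, g x ^ q * σ x ∂μ
        ≤ ∫⁻ x in Q, (maxD μ D f x) ^ q * σ x ∂μ :=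
          lintegral_mono fun x =>
            mul_le_mul_left (ENNReal.rpow_le_rpow (hgle x) hq0.le) _
      _ ≤ ∫⁻ x, (maxD μ D f x) ^ q * σ x ∂μ := setLIntegral_le_lintegral _ _
  -- Buckley's bound, with the RHS computed
  have hRHS : (∫⁻ x, f x ^ q * σ x ∂μ) = W := by
    have hpt : ∀ x, f x ^ q * σ x = Set.indicator Q w x := by
      intro x
      by_cases hx : x ∈ Q
      · rw [hf]
        simp only [Set.indicator_of_mem hx]
        rw [hσeval, ← ENNReal.rpow_add _ _ (hwpos x).ne' (hwfin x).ne]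
        have : q + (1 - q) = 1 := by ring
        rw [this, ENNReal.rpow_one]
      · rw [hf]
        simp only [Set.indicator_of_notMem hx]
        rw [ENNReal.zero_rpow_of_pos hq0, zero_mul]
    rw [lintegral_congr hpt, lintegral_indicator (hDmeas i)]
  have hbuck : (∫⁻ x, (maxD μ D f x) ^ q * σ x ∂μ) ^ (1 / q) ≤
      C * Bσ ^ (1 / (q - 1)) * W ^ (1 / q) := by
    have := hBuckley f hfmeas
    rwa [hRHS] at this
  -- put everything together
  have key : (∫⁻ x in Q, maxD μ D f x ∂μ) ≤ C * Bp * W := by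
    calc ∫⁻ x in Q, maxD μ D f x ∂μ = ∫⁻ x in Q, g x ∂μ := hgint
      _ ≤ (∫⁻ x in Q, g x ^ q * σ x ∂μ) ^ (1 / q) * W ^ (1 / p) := holder
      _ ≤ (∫⁻ x, (maxD μ D f x) ^ q * σ x ∂μ) ^ (1 / q) * W ^ (1 / p) :=
          mul_le_mul_left (ENNReal.rpow_le_rpow hdom (by positivity)) _
      _ ≤ (C * Bσ ^ (1 / (q - 1)) * W ^ (1 / q)) * W ^ (1 / p) :=
          mul_le_mul_left hbuck _
      _ = C * Bσ ^ (1 / (q - 1)) * W := by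
          rw [mul_assoc, ← ENNReal.rpow_add _ _ hWpos.ne' hWtop]
          congr 1
          rw [one_div, one_div, hconj.inv_add_inv_eq_one, ENNReal.rpow_one]
      _ ≤ C * Bp * W := by
          exact mul_le_mul_left (mul_le_mul_right hBσBp C) W
  exact ENNReal.div_le_of_le_mul key
end

section
/- Let $\mathscr{S}$ be a countable $\frac{1}{\tau}$-sparse family of dyadic cubes, and let $w, \sigma$ be weights with joint characteristic $[\sigma, w]_{B_2} := \sup_{Q \in \mathscr{S}} \langle \sigma \rangle_Q \langle w \rangle_Q < \infty$ and Fujii–Wilson characteristic $[\sigma]_{B_\infty} := \sup_{Q \in \mathscr{S}} \frac{1}{\sigma(Q)}\int_Q M(\sigma \mathbf{1}_Q) < \infty$, where $M f := \sup_{Q \in \mathscr{S}} \langle |f| \rangle_Q \mathbf{1}_Q$. Then for every $Q_0 \in \mathscr{S}$, the sparse operator $\Lambda_{\mathscr{S}} f := \sum_{Q \in \mathscr{S}} \langle f \rangle_Q \mathbf{1}_Q$ satisfies the testing estimate $\lVert \mathbf{1}_{Q_0} \Lambda_{\mathscr{S}}(\sigma \mathbf{1}_{Q_0}) \rVert_{L^2(w)}^2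 \le C_\tau\, [\sigma, w]_{B_2}\, [\sigma]_{B_\infty}\, \sigma(Q_0)$ with $C_\tau$ depending only on $\tau$. -/
open MeasureTheory ENNReal Set

/-- The maximal operator over the family `S`. -/
noncomputable def maxS {X ι : Type*} [MeasurableSpace X] (μ : Measure X)
    (S : ι → Set X) (f : X → ℝ≥0∞) (x : X) : ℝ≥0∞ :=
  ⨆ i, Set.indicator (S i) (fun _ => avg μ (S i) f) x

/-- The sparse operator associated to the family `S`. -/
noncomputable def sparseOp {X ι : Type*} [MeasurableSpace X] (μ : Measure X)
    (S : ι → Set X) (f : X → ℝ≥0∞) (x : X) : ℝ≥0∞ :=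
  ∑' i, Set.indicator (S i) (fun _ => avg μ (S i) f) x

private lemma exists_min_chain {X ι : Type*} (S : ι → Set X) (F : Finset ι)
    (hne : F.Nonempty) (hchain : ∀ i ∈ F, ∀ j ∈ F, S i ⊆ S j ∨ S j ⊆ S i) :
    ∃ j ∈ F, ∀ i ∈ F, S j ⊆ S i := by
  classical
  induction F using Finset.induction_on with
  | empty => exact absurd hne (by simp)
  | @insert a F' ha ih =>
    rcases F'.eq_empty_or_nonempty with h | h
    · subst h
      exact ⟨a, by simp, by simp⟩
    · obtain ⟨j, hjF, hjmin⟩ := ih h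
        (fun i hi k hk => hchain i (Finset.mem_insert_of_mem hi) k (Finset.mem_insert_of_mem hk))
      rcases hchain a (Finset.mem_insert_self a F') j (Finset.mem_insert_of_mem hjF) with hc | hc
      · refine ⟨a, Finset.mem_insert_self a F', fun i hi => ?_⟩
        rcases Finset.mem_insert.mp hi with rfl | hi
        · exact subset_rfl
        · exact hc.trans (hjmin i hi)
      · refine ⟨j, Finset.mem_insert_of_mem hjF, fun i hi => ?_⟩
        rcases Finset.mem_insert.mp hi with rfl | hi
        · exact hc
        · exact hjmin i hi

private lemma chain_sum_inv_le {X ι : Type*} [MeasurableSpace X] (μ : Measure X)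
    (τ : ℝ≥0∞) (hτ : 1 ≤ τ) (S E : ι → Set X)
    (hEm : ∀ i, MeasurableSet (E i)) (hsub : ∀ i, E i ⊆ S i)
    (hfin : ∀ i, μ (S i) < ∞)
    (hsparse : ∀ i, μ (S i) ≤ τ * μ (E i)) :
    ∀ (n : ℕ) (F : Finset ι), F.card ≤ n →
    (∀ i ∈ F, ∀ j ∈ F, S i ⊆ S j ∨ S j ⊆ S i) →
    ((F : Set ι).Pairwise (Function.onFun Disjoint E)) →
    ∀ (D : Set X), 0 < μ D → (∀ i ∈ F, D ⊆ S i) → (∀ i ∈ F, Disjoint D (E i)) →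
    ∑ i ∈ F, (μ (S i))⁻¹ ≤ (τ + 1) / μ D := by
  classical
  intro n
  induction n with
  | zero =>
    intro F hcard _ _ D hD _ _
    have : F = ∅ := Finset.card_eq_zero.mp (Nat.le_zero.mp hcard)
    simp [this]
  | succ n ih =>
    intro F hcard hchain hdisjE D hD hDsub hDdisj
    rcases F.eq_empty_or_nonempty with rfl | hne
    · simp
    obtain ⟨j, hjF, hjmin⟩ := exists_min_chain S F hne hchain
    -- basic facts
    have hb_fin : μ (S j) ≠ ∞ := (hfin j).ne
    have hd_fin : μ D ≠ ∞ := fun h => hb_fin (top_le_iff.mp (h ▸ measure_mono (hDsub j hjF)))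
    have hd0 : μ D ≠ 0 := hD.ne'
    have hde : μ D + μ (E j) ≤ μ (S j) := by
      rw [← measure_union (hDdisj j hjF) (hEm j)]
      exact measure_mono (Set.union_subset (hDsub j hjF) (hsub j))
    have hde0 : μ D + μ (E j) ≠ 0 := fun h => hd0 (by simpa using (add_eq_zero.mp h).1)
    have hde_fin : μ D + μ (E j) ≠ ∞ := fun h => hb_fin (top_le_iff.mp (h ▸ hde))
    -- inductive step on F.erase j with D' = D ∪ E j
    have hIH : ∑ i ∈ F.erase j, (μ (S i))⁻¹ ≤ (τ + 1) / (μ D + μ (E j)) := by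
      have hμD' : μ (D ∪ E j) = μ D + μ (E j) := measure_union (hDdisj j hjF) (hEm j)
      have := ih (F.erase j)
        (by
          have := Finset.card_erase_lt_of_mem hjF
          omega)
        (fun i hi k hk => hchain i (Finset.mem_of_mem_erase hi) k (Finset.mem_of_mem_erase hk))
        (hdisjE.mono (by exact_mod_cast Finset.erase_subset j F))
        (D ∪ E j)
        (by rw [hμD']; exact lt_of_lt_of_le hD le_self_add)
        (fun i hi => Set.union_subset (hDsub i (Finset.mem_of_mem_erase hi))
          ((hsub j).trans (hjmin i (Finset.mem_of_mem_erase hi))))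
        (fun i hi => Disjoint.union_left (hDdisj i (Finset.mem_of_mem_erase hi))
          (hdisjE (Finset.mem_coe.mpr hjF) (Finset.mem_coe.mpr (Finset.mem_of_mem_erase hi))
            (Ne.symm (Finset.ne_of_mem_erase hi))))
      rwa [hμD'] at this
    -- combine
    rw [← Finset.add_sum_erase F _ hjF]
    have h1 : (μ (S j))⁻¹ ≤ (μ D + μ (E j))⁻¹ := ENNReal.inv_le_inv' hde
    calc (μ (S j))⁻¹ + ∑ i ∈ F.erase j, (μ (S i))⁻¹
        ≤ (μ D + μ (E j))⁻¹ + (τ + 1) / (μ D + μ (E j)) := add_le_add h1 hIH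
      _ = (τ + 2) / (μ D + μ (E j)) := by
          rw [← one_div, ENNReal.div_add_div_same]
          ring_nf
      _ ≤ (τ + 1) / μ D := by
          rw [ENNReal.div_le_iff hde0 hde_fin]
          have expand : (τ + 1) / μ D * (μ D + μ (E j))
              = (τ + 1) / μ D * μ D + (τ + 1) / μ D * μ (E j) := by ring
          rw [expand, ENNReal.div_mul_cancel hd0 hd_fin]
          have h2 : (1 : ℝ≥0∞) ≤ (τ + 1) / μ D * μ (E j) := by
            have hDe : μ D ≤ (τ + 1) * μ (E j) := by
              calc μ D ≤ μ D + μ (E j) := le_self_add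
                _ ≤ μ (S j) := hde
                _ ≤ τ * μ (E j) := hsparse j
                _ ≤ (τ + 1) * μ (E j) := mul_le_mul_left le_self_add _
            calc (1 : ℝ≥0∞) = μ D / μ D := (ENNReal.div_self hd0 hd_fin).symm
              _ ≤ ((τ + 1) * μ (E j)) / μ D := ENNReal.div_le_div_right hDe _
              _ = (τ + 1) / μ D * μ (E j) := by
                  rw [div_eq_mul_inv, div_eq_mul_inv]; ring
          calc τ + 2 = (τ + 1) + 1 := by ring
            _ ≤ (τ + 1) + (τ + 1) / μ D * μ (E j) := add_le_add_right h2 _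

open Classical in
private lemma sq_tsum_le_aux {ι : Type*} (c : ι → ℝ≥0∞) (r : ι → ι → Prop)
    (hcomp : ∀ i j, c i ≠ 0 → c j ≠ 0 → r i j ∨ r j i) :
    (∑' i, c i) ^ 2 ≤ 2 * ∑' i, ∑' j, (if r i j then c i * c j else 0) := by
  classical
  have expand : (∑' i, c i) ^ 2 = ∑' i, ∑' j, c i * c j := by
    rw [sq]
    simp_rw [ENNReal.tsum_mul_left]
    rw [ENNReal.tsum_mul_right]
  have key : ∀ i j, c i * c j ≤
      (if r i j then c i * c j else 0) + (if r j i then c i * c j else 0) := by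
    intro i j
    by_cases h0 : c i * c j = 0
    · simp [h0]
    · obtain ⟨hi, hj⟩ := mul_ne_zero_iff.mp h0
      rcases hcomp i j hi hj with h | h
      · rw [if_pos h]; exact le_self_add
      · rw [if_pos h]; exact le_add_self
  have swap : (∑' i, ∑' j, if r j i then c i * c j else 0)
      = ∑' i, ∑' j, if r i j then c i * c j else 0 := by
    rw [ENNReal.tsum_comm]
    exact tsum_congr fun i => tsum_congr fun j => by rw [mul_comm]
  calc (∑' i, c i) ^ 2 = ∑' i, ∑' j, c i * c j := expand
    _ ≤ ∑' i, ∑' j, ((if r i j then c i * c j else 0) + (if r j i then c i * c j else 0)) :=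
        ENNReal.tsum_le_tsum fun i => ENNReal.tsum_le_tsum fun j => key i j
    _ = (∑' i, ∑' j, (if r i j then c i * c j else 0))
        + ∑' i, ∑' j, (if r j i then c i * c j else 0) := by
        simp_rw [ENNReal.tsum_add]
    _ = 2 * ∑' i, ∑' j, (if r i j then c i * c j else 0) := by
        rw [swap, two_mul]


open Classical in
private lemma tsum_ite_setLIntegral_le {X ι : Type*} [MeasurableSpace X] [Countable ι]
    (μ : Measure X) (E : ι → Set X) (hEm : ∀ i, MeasurableSet (E i))
    (hdisj : Pairwise (Function.onFun Disjoint E)) (c : ι → Prop)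
    (U : Set X) (hU : ∀ i, c i → E i ⊆ U) (f : X → ℝ≥0∞) :
    ∑' i, (if c i then ∫⁻ x in E i, f x ∂μ else 0) ≤ ∫⁻ x in U, f x ∂μ := by
  classical
  have h1 : (fun i => if c i then ∫⁻ x in E i, f x ∂μ else 0)
      = fun i => Set.indicator {i | c i} (fun i => ∫⁻ x in E i, f x ∂μ) i := by
    funext i; by_cases h : c i <;> simp [Set.indicator_apply, h]
  rw [h1, ← tsum_subtype]
  have hd : Pairwise (Function.onFun Disjoint fun i : {i | c i} => E i) :=
    fun m n hmn => hdisj fun h => hmn (Subtype.ext h)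
  rw [← lintegral_iUnion (fun i : {i | c i} => hEm i) hd f]
  exact lintegral_mono_set (Set.iUnion_subset fun i => hU i i.2)

open Classical in
private lemma tsum_ite_measure_le {X ι : Type*} [MeasurableSpace X] [Countable ι]
    (μ : Measure X) (E : ι → Set X) (hEm : ∀ i, MeasurableSet (E i))
    (hdisj : Pairwise (Function.onFun Disjoint E)) (c : ι → Prop)
    (U : Set X) (hU : ∀ i, c i → E i ⊆ U) :
    ∑' i, (if c i then μ (E i) else 0) ≤ μ U := by
  classical
  have h1 : ∀ i, (if c i then μ (E i) else 0)
      = (if c i then ∫⁻ _ in E i, (1 : ℝ≥0∞) ∂μ else 0) := by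
    intro i; by_cases h : c i <;> simp [h]
  simp only [h1]
  calc ∑' i, (if c i then ∫⁻ _ in E i, (1 : ℝ≥0∞) ∂μ else 0)
      ≤ ∫⁻ _ in U, (1 : ℝ≥0∞) ∂μ := tsum_ite_setLIntegral_le μ E hEm hdisj c U hU _
    _ = μ U := by simp

private lemma add_sq_le_two (u v : ℝ≥0∞) : (u + v) ^ 2 ≤ 2 * u ^ 2 + 2 * v ^ 2 := by
  have key : ∀ a b : ℝ≥0∞, a ≤ b → 2 * (a * b) ≤ a ^ 2 + b ^ 2 := by
    intro a b h
    obtain ⟨d, rfl⟩ := exists_add_of_le h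
    calc 2 * (a * (a + d)) = (a ^ 2 + (a * d + (a ^ 2 + a * d))) := by ring
      _ ≤ (a ^ 2 + (a * d + (a ^ 2 + a * d))) + d ^ 2 := le_self_add
      _ = a ^ 2 + (a + d) ^ 2 := by ring
  have h2 : 2 * (u * v) ≤ u ^ 2 + v ^ 2 := by
    rcases le_total u v with h | h
    · exact key u v h
    · rw [mul_comm u v, add_comm (u ^ 2)]; exact key v u h
  calc (u + v) ^ 2 = u ^ 2 + v ^ 2 + 2 * (u * v) := by ring
    _ ≤ u ^ 2 + v ^ 2 + (u ^ 2 + v ^ 2) := add_le_add_right h2 _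
    _ = 2 * u ^ 2 + 2 * v ^ 2 := by ring

/-- Testing estimate: `‖1_{Q₀} Λ_𝒮(σ 1_{Q₀})‖_{L²(w)}² ≤ C_τ [σ,w]_{B₂} [σ]_{B_∞} σ(Q₀)`,
with `C_τ` depending only on the sparseness constant `τ`. -/
theorem stmt7 (τ : ℝ≥0∞) (hτ : 1 ≤ τ) (hτ' : τ ≠ ∞) :
    ∃ C : ℝ≥0∞, 0 < C ∧ C ≠ ∞ ∧
    ∀ (X ι : Type) [MeasurableSpace X] [Countable ι],
    ∀ (μ : Measure X) (S E : ι → Set X),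
      (∀ i, MeasurableSet (S i)) → (∀ i, MeasurableSet (E i)) →
      (∀ i, E i ⊆ S i) →
      (∀ i, 0 < μ (S i) ∧ μ (S i) < ∞) →
      (∀ i, μ (S i) ≤ τ * μ (E i)) →
      Pairwise (Function.onFun Disjoint E) →
      (∀ i j, S i ⊆ S j ∨ S j ⊆ S i ∨ Disjoint (S i) (S j)) →
      ∀ (σ w : X → ℝ≥0∞), Measurable σ → Measurable w →
      ∀ B2 Binf : ℝ≥0∞,
        B2 = (⨆ i, avg μ (S i) σ * avg μ (S i) w) → B2 ≠ ∞ →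
        Binf = (⨆ i, (∫⁻ x in S i, maxS μ S (Set.indicator (S i) σ) x ∂μ) /
          ∫⁻ x in S i, σ x ∂μ) → Binf ≠ ∞ →
      ∀ i₀ : ι,
        (∫⁻ x in S i₀, (sparseOp μ S (Set.indicator (S i₀) σ) x) ^ 2 * w x ∂μ) ≤
          C * B2 * Binf * ∫⁻ x in S i₀, σ x ∂μ := by
  classical
  have hτ0 : τ ≠ 0 := fun h => by simp [h] at hτ
  refine ⟨22 * τ ^ 4, ?_, ?_, ?_⟩
  · exact pos_iff_ne_zero.mpr (mul_ne_zero (by norm_num) (pow_ne_zero 4 hτ0))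
  · exact ENNReal.mul_ne_top (by norm_num) (ENNReal.pow_ne_top hτ')
  intro X ι _ _ μ S E hSm hEm hEsub hSpos hsparse hEdisj hcomp σ w hσ hw B2 Binf hB2 hB2t
    hBinf hBinft i₀
  set σ₀ : X → ℝ≥0∞ := Set.indicator (S i₀) σ with hσ₀def
  have hσ₀m : Measurable σ₀ := hσ.indicator (hSm i₀)
  set s0 : ℝ≥0∞ := ∫⁻ x in S i₀, σ x ∂μ with hs0def
  have hμ0 : ∀ i, μ (S i) ≠ 0 := fun i => (hSpos i).1.ne'
  have hμt : ∀ i, μ (S i) ≠ ∞ := fun i => (hSpos i).2.ne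
  have hIσ₀le : ∀ i, ∫⁻ x in S i, σ₀ x ∂μ ≤ s0 := by
    intro i
    calc ∫⁻ x in S i, σ₀ x ∂μ ≤ ∫⁻ x, σ₀ x ∂μ := setLIntegral_le_lintegral _ _
      _ = s0 := by rw [hσ₀def, hs0def]; exact lintegral_indicator (hSm i₀) σ
  have hIσ₀eq : ∀ i, S i ⊆ S i₀ → ∫⁻ x in S i, σ₀ x ∂μ = ∫⁻ x in S i, σ x ∂μ := by
    intro i hi
    refine setLIntegral_congr_fun (hSm i) (fun x hx => ?_)
    rw [hσ₀def]
    exact Set.indicator_of_mem (hi hx) σ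
  have ha_le : ∀ i, avg μ (S i) σ₀ ≤ s0 / μ (S i) := fun i => by
    unfold avg; exact ENNReal.div_le_div_right (hIσ₀le i) _
  -- degenerate case: σ(Q₀) = 0
  by_cases hs00 : s0 = 0
  · have hz : ∀ x, sparseOp μ S σ₀ x = 0 := by
      intro x
      unfold sparseOp
      refine ENNReal.tsum_eq_zero.mpr fun i => ?_
      have hnum : ∫⁻ y in S i, σ₀ y ∂μ = 0 := le_antisymm (hs00 ▸ hIσ₀le i) (zero_le)
      have : avg μ (S i) σ₀ = 0 := by unfold avg; rw [hnum]; simp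
      simp [this]
    simp only [hz]
    simp
  -- degenerate case: w(Q₀) = 0
  by_cases hw00 : (∫⁻ x in S i₀, w x ∂μ) = 0
  · have hwz : ∀ᵐ x ∂(μ.restrict (S i₀)), w x = 0 := (lintegral_eq_zero_iff hw).mp hw00
    have hZ : ∫⁻ x in S i₀, (sparseOp μ S σ₀ x) ^ 2 * w x ∂μ = 0 := by
      have hae : (fun x => (sparseOp μ S σ₀ x) ^ 2 * w x) =ᵐ[μ.restrict (S i₀)]
          (fun _ => 0) := by
        filter_upwards [hwz] with x hx
        simp [hx]
      rw [lintegral_congr_ae hae, lintegral_zero]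
    rw [hZ]
    exact zero_le
  -- main case
  have hB2i : ∀ i, avg μ (S i) σ * avg μ (S i) w ≤ B2 := by
    intro i; rw [hB2]; exact le_iSup (fun i => avg μ (S i) σ * avg μ (S i) w) i
  have hs0t : s0 ≠ ∞ := by
    intro h
    apply hB2t
    have h1 : avg μ (S i₀) σ = ∞ := by
      unfold avg; rw [← hs0def, h]; exact ENNReal.top_div_of_ne_top (hμt i₀)
    have h2 : avg μ (S i₀) w ≠ 0 := by
      unfold avg; exact (ENNReal.div_pos hw00 (hμt i₀)).ne'
    have h3 := hB2i i₀
    rw [h1, ENNReal.top_mul h2] at h3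
    exact top_le_iff.mp h3
  have hwQ0t : (∫⁻ x in S i₀, w x ∂μ) ≠ ∞ := by
    intro h
    apply hB2t
    have h1 : avg μ (S i₀) w = ∞ := by
      unfold avg; rw [h]; exact ENNReal.top_div_of_ne_top (hμt i₀)
    have h2 : avg μ (S i₀) σ ≠ 0 := by
      unfold avg; rw [← hs0def]; exact (ENNReal.div_pos hs00 (hμt i₀)).ne'
    have h3 := hB2i i₀
    rw [h1, ENNReal.mul_top h2] at h3
    exact top_le_iff.mp h3
  have hs0i₀ : ∫⁻ x in S i₀, σ₀ x ∂μ = s0 := by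
    rw [hIσ₀eq i₀ subset_rfl, hs0def]
  have hmax_m : Measurable (maxS μ S σ₀) := by
    unfold maxS; exact Measurable.iSup fun i => measurable_const.indicator (hSm i)
  have hBinfi : (∫⁻ x in S i₀, maxS μ S σ₀ x ∂μ) / s0 ≤ Binf := by
    rw [hBinf, hσ₀def, hs0def]
    exact le_iSup (fun i => (∫⁻ x in S i, maxS μ S (Set.indicator (S i) σ) x ∂μ) /
      ∫⁻ x in S i, σ x ∂μ) i₀
  have hBinf1 : 1 ≤ Binf := by
    refine le_trans ?_ hBinfi
    have hptw : ∀ x ∈ S i₀, (s0 / μ (S i₀)) ≤ maxS μ S σ₀ x := by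
      intro x hx
      refine le_iSup_of_le i₀ ?_
      rw [Set.indicator_of_mem hx]
      unfold avg; rw [hs0i₀]
    have hint : s0 ≤ ∫⁻ x in S i₀, maxS μ S σ₀ x ∂μ := by
      calc s0 = (s0 / μ (S i₀)) * μ (S i₀) :=
            (ENNReal.div_mul_cancel (hμ0 i₀) (hμt i₀)).symm
        _ = ∫⁻ _ in S i₀, s0 / μ (S i₀) ∂μ := (setLIntegral_const _ _).symm
        _ ≤ ∫⁻ x in S i₀, maxS μ S σ₀ x ∂μ := setLIntegral_mono hmax_m hptw
    rw [ENNReal.le_div_iff_mul_le (Or.inl hs00) (Or.inl hs0t), one_mul]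
    exact hint
  have hMaxInt : ∫⁻ x in S i₀, maxS μ S σ₀ x ∂μ ≤ Binf * s0 := by
    have h := hBinfi
    rwa [ENNReal.div_le_iff hs00 hs0t] at h
  -- the main splitting
  set a : ι → ℝ≥0∞ := fun i => avg μ (S i) σ₀ with hadef
  set g : ι → X → ℝ≥0∞ :=
    fun i x => if S i ⊆ S i₀ then (S i).indicator (fun _ => a i) x else 0 with hgdef
  set T : X → ℝ≥0∞ := fun x => ∑' i, g i x with hTdef
  set K : ℝ≥0∞ :=
    ∑' i, if (S i₀ ⊆ S i ∧ ¬ S i ⊆ S i₀) then s0 / μ (S i) else 0 with hKdef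
  have hgm : ∀ i, Measurable (g i) := by
    intro i
    rw [hgdef]
    by_cases h : S i ⊆ S i₀
    · simp only [if_pos h]; exact measurable_const.indicator (hSm i)
    · simp only [if_neg h]; exact measurable_const
  have hTm : Measurable T := by
    rw [hTdef]; exact Measurable.ennreal_tsum hgm
  have hQ0ne : (S i₀).Nonempty := nonempty_of_measure_ne_zero (hμ0 i₀)
  -- pointwise bound on Q₀
  have hpt : ∀ x ∈ S i₀, sparseOp μ S σ₀ x ≤ T x + K := by
    intro x hx
    have hsum : T x + K = ∑' i, (g i x +
        if (S i₀ ⊆ S i ∧ ¬ S i ⊆ S i₀) then s0 / μ (S i) else 0) := by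
      rw [hTdef, hKdef, ENNReal.tsum_add]
    rw [hsum]
    unfold sparseOp
    refine ENNReal.tsum_le_tsum fun i => ?_
    by_cases hp : S i ⊆ S i₀
    · have hg : g i x = (S i).indicator (fun _ => a i) x := by
        rw [hgdef]; simp only [if_pos hp]
      rw [hg]
      exact le_self_add
    · by_cases hx' : x ∈ S i
      · have hsub : S i₀ ⊆ S i := by
          rcases hcomp i i₀ with h | h | h
          · exact absurd h hp
          · exact h
          · exact absurd hx (Set.disjoint_left.mp h hx')
        have hgi : g i x = 0 := by rw [hgdef]; simp only [if_neg hp]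
        rw [hgi, zero_add, if_pos ⟨hsub, hp⟩, Set.indicator_of_mem hx']
        exact ha_le i
      · rw [Set.indicator_of_notMem hx']
        exact zero_le
  -- bound on the tail constant K
  have boundK : K ≤ 3 * τ ^ 2 * s0 / μ (S i₀) := by
    have hKeq : K = s0 * ∑' i,
        (if (S i₀ ⊆ S i ∧ ¬ S i ⊆ S i₀) then (μ (S i))⁻¹ else 0) := by
      rw [hKdef, ← ENNReal.tsum_mul_left]
      refine tsum_congr fun i => ?_
      by_cases h : (S i₀ ⊆ S i ∧ ¬ S i ⊆ S i₀)
      · rw [if_pos h, if_pos h, div_eq_mul_inv]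
      · rw [if_neg h, if_neg h, mul_zero]
    have hSum : ∑' i, (if (S i₀ ⊆ S i ∧ ¬ S i ⊆ S i₀) then (μ (S i))⁻¹ else 0)
        ≤ 3 * τ ^ 2 / μ (S i₀) := by
      rw [ENNReal.tsum_eq_iSup_sum]
      refine iSup_le fun Fs => ?_
      rw [← Finset.sum_filter]
      set F : Finset ι := Fs.filter (fun i => S i₀ ⊆ S i ∧ ¬ S i ⊆ S i₀) with hFdef
      have hqF : ∀ i ∈ F, S i₀ ⊆ S i ∧ ¬ S i ⊆ S i₀ := by
        intro i hi
        exact (Finset.mem_filter.mp hi).2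
      rcases F.eq_empty_or_nonempty with hFe | hne
      · rw [hFe]; simp
      have hch : ∀ i ∈ F, ∀ j ∈ F, S i ⊆ S j ∨ S j ⊆ S i := by
        intro i hi j hj
        rcases hcomp i j with h | h | h
        · exact Or.inl h
        · exact Or.inr h
        · obtain ⟨x₀, hx₀⟩ := hQ0ne
          exact absurd ((hqF j hj).1 hx₀) (Set.disjoint_left.mp h ((hqF i hi).1 hx₀))
      obtain ⟨j, hjF, hjmin⟩ := exists_min_chain S F hne hch
      have hEj0 : μ (E j) ≠ 0 := by
        intro h
        exact hμ0 j (le_antisymm (le_trans (hsparse j) (by rw [h, mul_zero])) (zero_le))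
      have hEjt : μ (E j) ≠ ∞ := fun h =>
        hμt j (top_le_iff.mp (h ▸ measure_mono (hEsub j)))
      have hrest : ∑ i ∈ F.erase j, (μ (S i))⁻¹ ≤ (τ + 1) / μ (E j) := by
        refine chain_sum_inv_le μ τ hτ S E hEm hEsub (fun i => (hSpos i).2) hsparse
          (F.erase j).card (F.erase j) le_rfl
          (fun i hi k hk => hch i (Finset.mem_of_mem_erase hi) k (Finset.mem_of_mem_erase hk))
          (hEdisj.set_pairwise _)
          (E j) (pos_iff_ne_zero.mpr hEj0)
          (fun i hi => (hEsub j).trans (hjmin i (Finset.mem_of_mem_erase hi)))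
          (fun i hi => hEdisj (Ne.symm (Finset.ne_of_mem_erase hi)))
      have hjQ0 : μ (S i₀) ≤ μ (S j) := measure_mono (hqF j hjF).1
      calc ∑ i ∈ F, (μ (S i))⁻¹
          = (μ (S j))⁻¹ + ∑ i ∈ F.erase j, (μ (S i))⁻¹ :=
            (Finset.add_sum_erase F _ hjF).symm
        _ ≤ (μ (E j))⁻¹ + (τ + 1) / μ (E j) :=
            add_le_add (ENNReal.inv_le_inv' (measure_mono (hEsub j))) hrest
        _ = (τ + 2) / μ (E j) := by
            rw [← one_div, ENNReal.div_add_div_same]; ring_nf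
        _ ≤ (τ + 2) * (τ / μ (S j)) := by
            rw [div_eq_mul_inv]
            refine mul_le_mul_right ?_ _
            rw [ENNReal.le_div_iff_mul_le (Or.inl (hμ0 j)) (Or.inl (hμt j))]
            calc (μ (E j))⁻¹ * μ (S j) ≤ (μ (E j))⁻¹ * (τ * μ (E j)) :=
                  mul_le_mul_right (hsparse j) _
              _ = τ * ((μ (E j))⁻¹ * μ (E j)) := by ring
              _ = τ := by rw [ENNReal.inv_mul_cancel hEj0 hEjt, mul_one]
        _ = ((τ + 2) * τ) / μ (S j) := by rw [div_eq_mul_inv, div_eq_mul_inv, mul_assoc]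
        _ ≤ (3 * τ ^ 2) / μ (S j) := by
            refine ENNReal.div_le_div_right ?_ _
            have : τ * 1 ≤ τ * τ := mul_le_mul_right hτ τ
            calc (τ + 2) * τ = τ * τ + 2 * τ := by ring
              _ ≤ τ * τ + 2 * (τ * τ) := by
                  refine add_le_add_right (mul_le_mul_right ?_ 2) _
                  calc τ = τ * 1 := (mul_one τ).symm
                    _ ≤ τ * τ := mul_le_mul_right hτ τ
              _ = 3 * τ ^ 2 := by ring
        _ ≤ 3 * τ ^ 2 / μ (S i₀) := ENNReal.div_le_div_left hjQ0 _
    calc K = s0 * ∑' i, (if (S i₀ ⊆ S i ∧ ¬ S i ⊆ S i₀) then (μ (S i))⁻¹ else 0) := hKeq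
      _ ≤ s0 * (3 * τ ^ 2 / μ (S i₀)) := mul_le_mul_right hSum _
      _ = 3 * τ ^ 2 * s0 / μ (S i₀) := by
          rw [div_eq_mul_inv, div_eq_mul_inv]; ring
  have hind_le : ∀ (s : Set X) (cst : ℝ≥0∞) (x : X),
      s.indicator (fun _ => cst) x ≤ cst := by
    intro s cst x; by_cases h : x ∈ s <;> simp [h]
  -- main term bound
  have boundT : ∫⁻ x in S i₀, T x ^ 2 * w x ∂μ ≤ 2 * τ ^ 2 * B2 * (Binf * s0) := by
    have hTsq : ∀ x, T x ^ 2 ≤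
        2 * ∑' i, ∑' j, (if S j ⊆ S i then g i x * g j x else 0) := by
      intro x
      simp only [hTdef]
      refine sq_tsum_le_aux (fun i => g i x) (fun i j => S j ⊆ S i) ?_
      intro i j hi hj
      have hgmem : ∀ k, g k x ≠ 0 → x ∈ S k := by
        intro k hk
        by_contra hxk
        apply hk
        simp only [hgdef]
        by_cases h : S k ⊆ S i₀
        · simp [if_pos h, Set.indicator_of_notMem hxk]
        · simp [if_neg h]
      rcases hcomp i j with h | h | h
      · exact Or.inr h
      · exact Or.inl h
      · exact absurd (hgmem j hj) (Set.disjoint_left.mp h (hgmem i hi))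
    have hG : ∀ i j, Measurable (fun x => (if S j ⊆ S i then g i x * g j x else 0) * w x) := by
      intro i j
      by_cases h : S j ⊆ S i
      · simp only [if_pos h]; exact ((hgm i).mul (hgm j)).mul hw
      · simp only [if_neg h, zero_mul]; exact measurable_const
    have step1 : ∫⁻ x in S i₀, T x ^ 2 * w x ∂μ
        ≤ 2 * ∑' i, ∑' j, ∫⁻ x in S i₀, (if S j ⊆ S i then g i x * g j x else 0) * w x ∂μ := by
      have hrw : ∀ x, (2 * ∑' i, ∑' j, (if S j ⊆ S i then g i x * g j x else 0)) * w x
          = 2 * ∑' i, ∑' j, ((if S j ⊆ S i then g i x * g j x else 0) * w x) := by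
        intro x
        rw [mul_assoc]
        congr 1
        rw [← ENNReal.tsum_mul_right]
        exact tsum_congr fun i => (ENNReal.tsum_mul_right).symm
      calc ∫⁻ x in S i₀, T x ^ 2 * w x ∂μ
          ≤ ∫⁻ x in S i₀,
              (2 * ∑' i, ∑' j, (if S j ⊆ S i then g i x * g j x else 0)) * w x ∂μ :=
            lintegral_mono fun x => mul_le_mul_left (hTsq x) _
        _ = 2 * ∫⁻ x in S i₀,
              ∑' i, ∑' j, ((if S j ⊆ S i then g i x * g j x else 0) * w x) ∂μ := by
            simp only [hrw]
            exact lintegral_const_mul 2 (Measurable.ennreal_tsum fun i =>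
              Measurable.ennreal_tsum fun j => hG i j)
        _ = 2 * ∑' i, ∫⁻ x in S i₀,
              ∑' j, ((if S j ⊆ S i then g i x * g j x else 0) * w x) ∂μ := by
            rw [lintegral_tsum fun i => (Measurable.ennreal_tsum fun j => hG i j).aemeasurable]
        _ = 2 * ∑' i, ∑' j,
              ∫⁻ x in S i₀, (if S j ⊆ S i then g i x * g j x else 0) * w x ∂μ := by
            congr 1
            exact tsum_congr fun i => lintegral_tsum fun j => (hG i j).aemeasurable
    have key_ij : ∀ i j, ∫⁻ x in S i₀, (if S j ⊆ S i then g i x * g j x else 0) * w x ∂μ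
        ≤ (if S i ⊆ S i₀ then a i else 0) *
          (if S j ⊆ S i then
            (if S j ⊆ S i₀ then a j * (∫⁻ x in S j, w x ∂μ) else 0) else 0) := by
      intro i j
      by_cases hji : S j ⊆ S i
      swap
      · simp [hji]
      by_cases hpi : S i ⊆ S i₀
      swap
      · have hz : ∀ x, g i x = 0 := fun x => by simp [hgdef, hpi]
        simp [hz, hji, hpi]
      by_cases hpj : S j ⊆ S i₀
      swap
      · have hz : ∀ x, g j x = 0 := fun x => by simp [hgdef, hpj]
        simp [hz, hji, hpi, hpj]
      simp only [if_pos hji, if_pos hpi, if_pos hpj]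
      have hptw : ∀ x, (g i x * g j x) * w x ≤ (a i * a j) * ((S j).indicator w x) := by
        intro x
        by_cases hx : x ∈ S j
        · rw [Set.indicator_of_mem hx]
          have h1 : g i x ≤ a i := by
            simp only [hgdef, if_pos hpi]; exact hind_le _ _ _
          have h2 : g j x ≤ a j := by
            simp only [hgdef, if_pos hpj]; exact hind_le _ _ _
          exact mul_le_mul_left (mul_le_mul' h1 h2) _
        · have hz : g j x = 0 := by
            simp only [hgdef, if_pos hpj]
            exact Set.indicator_of_notMem hx _
          simp [hz]
      calc ∫⁻ x in S i₀, (g i x * g j x) * w x ∂μ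
          ≤ ∫⁻ x in S i₀, (a i * a j) * (S j).indicator w x ∂μ :=
            lintegral_mono fun x => hptw x
        _ = (a i * a j) * ∫⁻ x in S i₀, (S j).indicator w x ∂μ :=
            lintegral_const_mul _ (hw.indicator (hSm j))
        _ ≤ (a i * a j) * ∫⁻ x, (S j).indicator w x ∂μ :=
            mul_le_mul_right (setLIntegral_le_lintegral _ _) _
        _ = (a i * a j) * ∫⁻ x in S j, w x ∂μ := by rw [lintegral_indicator (hSm j)]
        _ = a i * (a j * ∫⁻ x in S j, w x ∂μ) := by ring
    have inner_le : ∀ i, ∑' j, (if S j ⊆ S i then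
        (if S j ⊆ S i₀ then a j * (∫⁻ x in S j, w x ∂μ) else 0) else 0)
        ≤ τ * B2 * μ (S i) := by
      intro i
      have hterm : ∀ j, (if S j ⊆ S i then
          (if S j ⊆ S i₀ then a j * (∫⁻ x in S j, w x ∂μ) else 0) else 0)
          ≤ τ * B2 * (if S j ⊆ S i then μ (E j) else 0) := by
        intro j
        by_cases hji : S j ⊆ S i
        swap
        · simp [hji]
        simp only [if_pos hji]
        by_cases hpj : S j ⊆ S i₀
        swap
        · simp only [if_neg hpj]; exact zero_le
        simp only [if_pos hpj]
        have h1 : a j = avg μ (S j) σ := by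
          simp only [hadef]; unfold avg; rw [hIσ₀eq j hpj]
        have h2 : avg μ (S j) w * μ (S j) = ∫⁻ x in S j, w x ∂μ := by
          unfold avg; exact ENNReal.div_mul_cancel (hμ0 j) (hμt j)
        calc a j * (∫⁻ x in S j, w x ∂μ)
            = avg μ (S j) σ * (avg μ (S j) w * μ (S j)) := by rw [h1, h2]
          _ = (avg μ (S j) σ * avg μ (S j) w) * μ (S j) := by ring
          _ ≤ B2 * μ (S j) := mul_le_mul_left (hB2i j) _
          _ ≤ B2 * (τ * μ (E j)) := mul_le_mul_right (hsparse j) _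
          _ = τ * B2 * μ (E j) := by ring
      calc ∑' j, (if S j ⊆ S i then
          (if S j ⊆ S i₀ then a j * (∫⁻ x in S j, w x ∂μ) else 0) else 0)
          ≤ ∑' j, τ * B2 * (if S j ⊆ S i then μ (E j) else 0) :=
            ENNReal.tsum_le_tsum hterm
        _ = τ * B2 * ∑' j, (if S j ⊆ S i then μ (E j) else 0) := ENNReal.tsum_mul_left
        _ ≤ τ * B2 * μ (S i) := mul_le_mul_right
            (tsum_ite_measure_le μ E hEm hEdisj _ (S i)
              (fun j h => (hEsub j).trans h)) _
    have hBstep : ∑' i, (if S i ⊆ S i₀ then ∫⁻ x in S i, σ₀ x ∂μ else 0)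
        ≤ τ * (Binf * s0) := by
      have hterm : ∀ i, (if S i ⊆ S i₀ then ∫⁻ x in S i, σ₀ x ∂μ else 0)
          ≤ τ * (if S i ⊆ S i₀ then ∫⁻ x in E i, maxS μ S σ₀ x ∂μ else 0) := by
        intro i
        by_cases hpi : S i ⊆ S i₀
        swap
        · simp [hpi]
        simp only [if_pos hpi]
        have h1 : ∫⁻ x in S i, σ₀ x ∂μ = a i * μ (S i) := by
          simp only [hadef]; unfold avg
          exact (ENNReal.div_mul_cancel (hμ0 i) (hμt i)).symm
        have h3 : a i * μ (E i) ≤ ∫⁻ x in E i, maxS μ S σ₀ x ∂μ := by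
          rw [← setLIntegral_const (E i) (a i)]
          refine setLIntegral_mono hmax_m fun x hx => ?_
          refine le_iSup_of_le i ?_
          rw [Set.indicator_of_mem (hEsub i hx)]
        calc ∫⁻ x in S i, σ₀ x ∂μ = a i * μ (S i) := h1
          _ ≤ a i * (τ * μ (E i)) := mul_le_mul_right (hsparse i) _
          _ = τ * (a i * μ (E i)) := by ring
          _ ≤ τ * ∫⁻ x in E i, maxS μ S σ₀ x ∂μ := mul_le_mul_right h3 _
      calc ∑' i, (if S i ⊆ S i₀ then ∫⁻ x in S i, σ₀ x ∂μ else 0)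
          ≤ ∑' i, τ * (if S i ⊆ S i₀ then ∫⁻ x in E i, maxS μ S σ₀ x ∂μ else 0) :=
            ENNReal.tsum_le_tsum hterm
        _ = τ * ∑' i, (if S i ⊆ S i₀ then ∫⁻ x in E i, maxS μ S σ₀ x ∂μ else 0) :=
            ENNReal.tsum_mul_left
        _ ≤ τ * ∫⁻ x in S i₀, maxS μ S σ₀ x ∂μ := mul_le_mul_right
            (tsum_ite_setLIntegral_le μ E hEm hEdisj _ (S i₀)
              (fun i h => (hEsub i).trans h) _) _
        _ ≤ τ * (Binf * s0) := mul_le_mul_right hMaxInt _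
    have hiEq : ∀ i, (if S i ⊆ S i₀ then a i else 0) * (τ * B2 * μ (S i))
        = (τ * B2) * (if S i ⊆ S i₀ then ∫⁻ x in S i, σ₀ x ∂μ else 0) := by
      intro i
      by_cases hpi : S i ⊆ S i₀
      · have haμ : a i * μ (S i) = ∫⁻ x in S i, σ₀ x ∂μ := by
          simp only [hadef]; unfold avg
          exact ENNReal.div_mul_cancel (hμ0 i) (hμt i)
        rw [if_pos hpi, if_pos hpi, ← haμ]; ring
      · rw [if_neg hpi, if_neg hpi]; simp
    calc ∫⁻ x in S i₀, T x ^ 2 * w x ∂μ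
        ≤ 2 * ∑' i, ∑' j,
            ∫⁻ x in S i₀, (if S j ⊆ S i then g i x * g j x else 0) * w x ∂μ := step1
      _ ≤ 2 * ∑' i, ((if S i ⊆ S i₀ then a i else 0) * (τ * B2 * μ (S i))) := by
          refine mul_le_mul_right (ENNReal.tsum_le_tsum fun i => ?_) 2
          calc ∑' j, ∫⁻ x in S i₀, (if S j ⊆ S i then g i x * g j x else 0) * w x ∂μ
              ≤ ∑' j, ((if S i ⊆ S i₀ then a i else 0) *
                (if S j ⊆ S i then
                  (if S j ⊆ S i₀ then a j * (∫⁻ x in S j, w x ∂μ) else 0) else 0)) :=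
                ENNReal.tsum_le_tsum (key_ij i)
            _ = (if S i ⊆ S i₀ then a i else 0) * ∑' j, (if S j ⊆ S i then
                  (if S j ⊆ S i₀ then a j * (∫⁻ x in S j, w x ∂μ) else 0) else 0) :=
                ENNReal.tsum_mul_left
            _ ≤ (if S i ⊆ S i₀ then a i else 0) * (τ * B2 * μ (S i)) :=
                mul_le_mul_right (inner_le i) _
      _ = 2 * ((τ * B2) * ∑' i, (if S i ⊆ S i₀ then ∫⁻ x in S i, σ₀ x ∂μ else 0)) := by
          simp only [hiEq]
          rw [ENNReal.tsum_mul_left]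
      _ ≤ 2 * ((τ * B2) * (τ * (Binf * s0))) :=
          mul_le_mul_right (mul_le_mul_right hBstep _) 2
      _ = 2 * τ ^ 2 * B2 * (Binf * s0) := by ring
  -- put everything together
  have hττ : τ ^ 2 ≤ τ ^ 4 := pow_le_pow_right' hτ (by norm_num)
  calc ∫⁻ x in S i₀, (sparseOp μ S σ₀ x) ^ 2 * w x ∂μ
      ≤ ∫⁻ x in S i₀, (T x + K) ^ 2 * w x ∂μ := by
        refine setLIntegral_mono (((hTm.add measurable_const).pow_const 2).mul hw) ?_
        exact fun x hx => mul_le_mul_left (pow_le_pow_left' (hpt x hx) 2) _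
    _ ≤ ∫⁻ x in S i₀, (2 * T x ^ 2 + 2 * K ^ 2) * w x ∂μ :=
        lintegral_mono fun x => mul_le_mul_left (add_sq_le_two _ _) _
    _ = 2 * ∫⁻ x in S i₀, T x ^ 2 * w x ∂μ + 2 * K ^ 2 * ∫⁻ x in S i₀, w x ∂μ := by
        have hptw : ∀ x : X, (2 * T x ^ 2 + 2 * K ^ 2) * w x
            = 2 * (T x ^ 2 * w x) + (2 * K ^ 2) * w x := fun x => by ring
        simp only [hptw]
        rw [lintegral_add_left (f := fun x => 2 * (T x ^ 2 * w x)) (measurable_const.mul ((hTm.pow_const 2).mul hw)) _,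
          lintegral_const_mul 2 (f := fun x => T x ^ 2 * w x) ((hTm.pow_const 2).mul hw),
          lintegral_const_mul (2 * K ^ 2) hw]
    _ ≤ 2 * (2 * τ ^ 2 * B2 * (Binf * s0)) + 2 * K ^ 2 * ∫⁻ x in S i₀, w x ∂μ :=
        add_le_add_left (mul_le_mul_right boundT 2) _
    _ ≤ 22 * τ ^ 4 * B2 * Binf * s0 := by
        have hmain : 2 * (2 * τ ^ 2 * B2 * (Binf * s0)) ≤ 4 * τ ^ 4 * B2 * Binf * s0 := by
          calc 2 * (2 * τ ^ 2 * B2 * (Binf * s0)) = 4 * τ ^ 2 * B2 * Binf * s0 := by ring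
            _ ≤ 4 * τ ^ 4 * B2 * Binf * s0 := by
                refine mul_le_mul_left (mul_le_mul_left
                  (mul_le_mul_left (mul_le_mul_right hττ 4) B2) Binf) s0
        have hK2 : 2 * K ^ 2 * ∫⁻ x in S i₀, w x ∂μ ≤ 18 * τ ^ 4 * B2 * Binf * s0 := by
          have hKw : 2 * K ^ 2 * ∫⁻ x in S i₀, w x ∂μ
              ≤ 2 * (3 * τ ^ 2 * s0 / μ (S i₀)) ^ 2 * ∫⁻ x in S i₀, w x ∂μ :=
            mul_le_mul_left (mul_le_mul_right (pow_le_pow_left' boundK 2) 2) _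
          have hEq : 2 * (3 * τ ^ 2 * s0 / μ (S i₀)) ^ 2 * ∫⁻ x in S i₀, w x ∂μ
              = 18 * τ ^ 4 *
                ((s0 / μ (S i₀)) * ((∫⁻ x in S i₀, w x ∂μ) / μ (S i₀))) * s0 := by
            simp only [div_eq_mul_inv]; ring
          have hB : (s0 / μ (S i₀)) * ((∫⁻ x in S i₀, w x ∂μ) / μ (S i₀)) ≤ B2 := by
            have h := hB2i i₀
            unfold avg at h
            rw [← hs0def] at h
            exact h
          calc 2 * K ^ 2 * ∫⁻ x in S i₀, w x ∂μ
              ≤ 2 * (3 * τ ^ 2 * s0 / μ (S i₀)) ^ 2 * ∫⁻ x in S i₀, w x ∂μ := hKw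
            _ = 18 * τ ^ 4 *
                ((s0 / μ (S i₀)) * ((∫⁻ x in S i₀, w x ∂μ) / μ (S i₀))) * s0 := hEq
            _ ≤ 18 * τ ^ 4 * B2 * s0 := mul_le_mul_left (mul_le_mul_right hB _) _
            _ = 18 * τ ^ 4 * B2 * 1 * s0 := by ring
            _ ≤ 18 * τ ^ 4 * B2 * Binf * s0 :=
                mul_le_mul_left (mul_le_mul_right hBinf1 _) _
        calc 2 * (2 * τ ^ 2 * B2 * (Binf * s0)) + 2 * K ^ 2 * ∫⁻ x in S i₀, w x ∂μ
            ≤ 4 * τ ^ 4 * B2 * Binf * s0 + 18 * τ ^ 4 * B2 * Binf * s0 :=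
              add_le_add hmain hK2
          _ = 22 * τ ^ 4 * B2 * Binf * s0 := by ring
end

section
/- Let $\mathscr{S}$ be a collection of sets, each containing a subset $E_Q$ with $|Q| \le \tau |E_Q|$ and the $E_Q$ pairwise disjoint, and suppose the sets in $\mathscr{S}$ contained in a fixed $Q_0 \in \mathscr{S}$ satisfy the nesting property of a dyadic lattice. Let $\sigma$ be a weight and $M f := \sup_{Q \in \mathscr{S}} \langle |f| \rangle_Q \mathbf{1}_Q$. Then $\sum_{Q \in \mathscr{S},\, Q \subseteq Q_0} \langle \sigma \rangle_Q\, |Q| \le \tau \int_{Q_0} M(\sigma \mathbf{1}_{Q_0}) \le \tau\, [\sigma]_{B_\infty}\, \sigma(Q_0)$, where $[\sigma]_{B_\infty} := \sup_{Q \in \mathscr{S}} \sigma(Q)^{-1} \int_Q M(\sigma \mathbf{1}_Q)$. -/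
open MeasureTheory ENNReal Set

/-- Sparse sum bound: `∑_{Q ⊆ Q₀} ⟨σ⟩_Q |Q| ≤ τ ∫_{Q₀} M(σ1_{Q₀}) ≤ τ [σ]_{B_∞} σ(Q₀)`. -/
theorem stmt8 {X ι : Type*} [MeasurableSpace X] [Countable ι] (μ : Measure X)
    (S E : ι → Set X) (τ : ℝ≥0∞) (hτ : 1 ≤ τ) (hτ' : τ ≠ ∞)
    (hSmeas : ∀ i, MeasurableSet (S i)) (hEmeas : ∀ i, MeasurableSet (E i))
    (hsub : ∀ i, E i ⊆ S i)
    (hvol : ∀ i, 0 < μ (S i) ∧ μ (S i) < ∞)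
    (hsparse : ∀ i, μ (S i) ≤ τ * μ (E i))
    (hdisj : Pairwise (Function.onFun Disjoint E))
    (i₀ : ι)
    (hnest : ∀ i j, S i ⊆ S i₀ → S j ⊆ S i₀ →
      S i ⊆ S j ∨ S j ⊆ S i ∨ Disjoint (S i) (S j))
    (σ : X → ℝ≥0∞) (hσ : Measurable σ)
    (hσvol : ∀ i, 0 < ∫⁻ x in S i, σ x ∂μ ∧ (∫⁻ x in S i, σ x ∂μ) < ∞)
    (Binf : ℝ≥0∞)
    (hBinf : Binf = ⨆ i, (∫⁻ x in S i, maxS μ S (Set.indicator (S i) σ) x ∂μ) /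
      ∫⁻ x in S i, σ x ∂μ) :
    (∑' i : {i // S i ⊆ S i₀}, avg μ (S i.1) σ * μ (S i.1)) ≤
        τ * ∫⁻ x in S i₀, maxS μ S (Set.indicator (S i₀) σ) x ∂μ ∧
      τ * (∫⁻ x in S i₀, maxS μ S (Set.indicator (S i₀) σ) x ∂μ) ≤
        τ * Binf * ∫⁻ x in S i₀, σ x ∂μ := by

  set f := Set.indicator (S i₀) σ with hf
  set M := maxS μ S f with hM
  -- key: for i with S i ⊆ S i₀, avg over S i of σ equals avg of f
  have havg : ∀ i, S i ⊆ S i₀ → avg μ (S i) σ = avg μ (S i) f := by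
    intro i hi
    unfold avg
    congr 1
    refine setLIntegral_congr_fun (hSmeas i) ?_
    intro x hx
    exact (Set.indicator_of_mem (hi hx) σ).symm
  -- key: on E i, M dominates avg μ (S i) f
  have hMge : ∀ i, ∀ x ∈ E i, avg μ (S i) f ≤ M x := by
    intro i x hx
    have h := le_iSup (fun j => (S j).indicator (fun _ => avg μ (S j) f) x) i
    rwa [Set.indicator_of_mem (hsub i hx)] at h
  have hEint : ∀ i, S i ⊆ S i₀ → avg μ (S i) σ * μ (E i) ≤ ∫⁻ x in E i, M x ∂μ := by
    intro i hi
    rw [havg i hi]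
    calc avg μ (S i) f * μ (E i) = ∫⁻ _ in E i, avg μ (S i) f ∂μ := by
          rw [setLIntegral_const]
      _ ≤ ∫⁻ x in E i, M x ∂μ :=
          setLIntegral_mono' (hEmeas i) (fun x hx => hMge i x hx)
  have part1 : (∑' i : {i // S i ⊆ S i₀}, avg μ (S i.1) σ * μ (S i.1)) ≤
      τ * ∫⁻ x in S i₀, M x ∂μ := by
    calc (∑' i : {i // S i ⊆ S i₀}, avg μ (S i.1) σ * μ (S i.1))
        ≤ ∑' i : {i // S i ⊆ S i₀}, τ * (avg μ (S i.1) σ * μ (E i.1)) := by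
          refine ENNReal.tsum_le_tsum fun i => ?_
          calc avg μ (S i.1) σ * μ (S i.1) ≤ avg μ (S i.1) σ * (τ * μ (E i.1)) :=
                mul_le_mul_right (hsparse i.1) _
            _ = τ * (avg μ (S i.1) σ * μ (E i.1)) := by ring
      _ ≤ ∑' i : {i // S i ⊆ S i₀}, τ * ∫⁻ x in E i.1, M x ∂μ :=
          ENNReal.tsum_le_tsum fun i => mul_le_mul_right (hEint i.1 i.2) τ
      _ = τ * ∑' i : {i // S i ⊆ S i₀}, ∫⁻ x in E i.1, M x ∂μ := ENNReal.tsum_mul_left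
      _ = τ * ∫⁻ x in ⋃ i : {i // S i ⊆ S i₀}, E i.1, M x ∂μ := by
          rw [lintegral_iUnion (fun i => hEmeas i.1)
            (fun i j hij => hdisj (Subtype.coe_injective.ne hij))]
      _ ≤ τ * ∫⁻ x in S i₀, M x ∂μ := by
          refine mul_le_mul_right (lintegral_mono_set ?_) τ
          exact Set.iUnion_subset fun i => (hsub i.1).trans i.2
  refine ⟨part1, ?_⟩
  -- part 2
  have hle : (∫⁻ x in S i₀, M x ∂μ) / (∫⁻ x in S i₀, σ x ∂μ) ≤ Binf := by
    rw [hBinf]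
    exact le_iSup (fun i => (∫⁻ x in S i, maxS μ S (Set.indicator (S i) σ) x ∂μ) /
      ∫⁻ x in S i, σ x ∂μ) i₀
  rw [ENNReal.div_le_iff (hσvol i₀).1.ne' (hσvol i₀).2.ne] at hle
  calc τ * ∫⁻ x in S i₀, M x ∂μ ≤ τ * (Binf * ∫⁻ x in S i₀, σ x ∂μ) :=
        mul_le_mul_right hle τ
    _ = τ * Binf * ∫⁻ x in S i₀, σ x ∂μ := by rw [mul_assoc]
end

section
/- Let $\sigma$ be a weight on a measure space, $\mathscr{S}$ a countable family of sets of finite positive $\sigma$-measure, and define the weighted maximal operator $M^\sigma f := \sup_{Q \in \mathscr{S}} \big( \sigma(Q)^{-1} \int_Q |f| \sigma \big) \mathbf{1}_Q$, where $\mathscr{S}$ has the dyadic nesting property (any two sets nested or disjoint). Then for $1 < p \le \infty$, $\lVert M^\sigma \rVert_{L^p(\sigma) \to L^p(\sigma)} \le p'$, with constant independent of the weight $\sigma$. -/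
open MeasureTheory ENNReal Set

lemma iSup_rpow' {κ : Sort*} (b : κ → ℝ≥0∞) {q : ℝ} (hq : 0 < q) :
    (⨆ i, b i) ^ q = ⨆ i, (b i) ^ q := by
  refine le_antisymm ?_ (iSup_le fun i => ENNReal.rpow_le_rpow (le_iSup b i) hq.le)
  have key : ∀ x : ℝ≥0∞, (x ^ q) ^ (1/q) = x := by
    intro x
    rw [← ENNReal.rpow_mul, mul_one_div_cancel hq.ne', ENNReal.rpow_one]
  have h1 : (⨆ i, b i) ≤ (⨆ i, (b i) ^ q) ^ (1/q) := by
    refine iSup_le fun i => ?_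
    calc b i = (b i ^ q) ^ (1/q) := (key _).symm
    _ ≤ _ := ENNReal.rpow_le_rpow (le_iSup (fun i => b i ^ q) i) (by positivity)
  calc (⨆ i, b i) ^ q ≤ (((⨆ i, (b i) ^ q) ^ (1/q)) : ℝ≥0∞) ^ q :=
        ENNReal.rpow_le_rpow h1 hq.le
  _ = ⨆ i, (b i) ^ q := by rw [← ENNReal.rpow_mul, one_div_mul_cancel hq.ne', ENNReal.rpow_one]

lemma iSup_min_nat (c : ℝ≥0∞) : ⨆ n : ℕ, (c ⊓ n) = c := by
  refine le_antisymm (iSup_le fun n => inf_le_left) ?_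
  rcases eq_or_ne c ⊤ with rfl | hc
  · simp only [top_inf_eq]
    rw [ENNReal.iSup_natCast]
  · obtain ⟨n, hn⟩ := ENNReal.exists_nat_gt hc
    exact le_trans (le_of_eq (inf_eq_left.mpr hn.le).symm) (le_iSup (fun n : ℕ => c ⊓ (n:ℝ≥0∞)) n)

lemma layercakeE {α : Type*} [MeasurableSpace α] (μ : Measure α) {g : α → ℝ≥0∞}
    (hg : Measurable g) {q : ℝ} (hq : 0 < q) :
    ∫⁻ x, g x ^ q ∂μ = ENNReal.ofReal q *
      ∫⁻ t in Ioi (0:ℝ), μ {a | ENNReal.ofReal t < g a} * ENNReal.ofReal (t ^ (q-1)) := by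
  set gn : ℕ → α → ℝ := fun n x => (g x ⊓ n).toReal with hgn
  have gn_mble : ∀ n, Measurable (gn n) := fun n => (hg.inf measurable_const).ennreal_toReal
  have gn_nn : ∀ n x, 0 ≤ gn n x := fun n x => ENNReal.toReal_nonneg
  have hfin : ∀ (n : ℕ) (x : α), g x ⊓ (n:ℝ≥0∞) ≠ ∞ :=
    fun n x => ne_top_of_le_ne_top (ENNReal.natCast_ne_top n) inf_le_right
  have hmono : ∀ i j : ℕ, i ≤ j → ∀ x, g x ⊓ (i:ℝ≥0∞) ≤ g x ⊓ (j:ℝ≥0∞) :=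
    fun i j hij x => inf_le_inf_left _ (Nat.cast_le.mpr hij)
  have key : ∀ n : ℕ, ∫⁻ x, (g x ⊓ n) ^ q ∂μ =
      ENNReal.ofReal q * ∫⁻ t in Ioi (0:ℝ),
        μ {a | ENNReal.ofReal t < g a ⊓ n} * ENNReal.ofReal (t ^ (q-1)) := by
    intro n
    have H := lintegral_rpow_eq_lintegral_meas_lt_mul μ
      (f := gn n) (Filter.Eventually.of_forall (gn_nn n)) (gn_mble n).aemeasurable hq
    have l1 : ∀ x, ENNReal.ofReal (gn n x ^ q) = (g x ⊓ n) ^ q := by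
      intro x
      simp only [hgn]
      rw [← ENNReal.ofReal_rpow_of_nonneg ENNReal.toReal_nonneg hq.le,
        ENNReal.ofReal_toReal (hfin n x)]
    have l2 : ∀ t ∈ Ioi (0:ℝ), {a | t < gn n a} = {a | ENNReal.ofReal t < g a ⊓ n} := by
      intro t ht
      ext a
      simp only [mem_setOf_eq, hgn]
      rw [ENNReal.ofReal_lt_iff_lt_toReal (le_of_lt ht) (hfin n a)]
    simp_rw [l1] at H
    rw [H]
    congr 1
    refine lintegral_congr_ae ?_
    filter_upwards [self_mem_ae_restrict (measurableSet_Ioi : MeasurableSet (Ioi (0:ℝ)))]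
      with t ht
    rw [l2 t ht]
  have lhs : ∫⁻ x, g x ^ q ∂μ = ⨆ n : ℕ, ∫⁻ x, (g x ⊓ n) ^ q ∂μ := by
    rw [← lintegral_iSup (fun n => (hg.min measurable_const).pow_const q)]
    · congr 1; ext x
      rw [← iSup_rpow' _ hq, iSup_min_nat]
    · intro i j hij x
      exact ENNReal.rpow_le_rpow (hmono i j hij x) hq.le
  have rhs : ∀ t ∈ Ioi (0:ℝ), μ {a | ENNReal.ofReal t < g a} =
      ⨆ n : ℕ, μ {a | ENNReal.ofReal t < g a ⊓ n} := by
    intro t ht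
    rw [← Directed.measure_iUnion]
    · congr 1
      ext a
      simp only [mem_iUnion, mem_setOf_eq]
      constructor
      · rintro h
        obtain ⟨n, hn⟩ := exists_nat_gt t
        refine ⟨n, lt_inf_iff.mpr ⟨h, ?_⟩⟩
        calc ENNReal.ofReal t < ENNReal.ofReal n :=
              (ENNReal.ofReal_lt_ofReal_iff_of_nonneg (le_of_lt ht)).mpr hn
        _ ≤ (n:ℝ≥0∞) := by rw [ENNReal.ofReal_natCast]
      · rintro ⟨n, hn⟩
        exact lt_of_lt_of_le hn inf_le_left
    · exact Monotone.directed_le fun i j hij a ha => lt_of_lt_of_le ha (hmono i j hij a)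
  have rmble : ∀ n : ℕ, Measurable fun t : ℝ =>
      μ {a | ENNReal.ofReal t < g a ⊓ n} * ENNReal.ofReal (t ^ (q-1)) := by
    intro n
    refine Measurable.mul ?_ (by measurability)
    refine Antitone.measurable fun s t hst => measure_mono fun a ha => ?_
    exact lt_of_le_of_lt (ENNReal.ofReal_le_ofReal hst) ha
  rw [lhs]
  simp_rw [key]
  rw [← ENNReal.mul_iSup]
  congr 1
  rw [← lintegral_iSup rmble]
  · refine lintegral_congr_ae ?_
    filter_upwards [self_mem_ae_restrict (measurableSet_Ioi : MeasurableSet (Ioi (0:ℝ)))]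
      with t ht
    rw [rhs t ht, ENNReal.iSup_mul]
  · intro i j hij t
    exact mul_le_mul_left (measure_mono fun a ha => lt_of_lt_of_le ha (hmono i j hij a)) _

/-- The weighted dyadic maximal operator over the family `S` with respect to the
measure `m` (playing the role of `σ dx`). -/
noncomputable def maxW {X ι : Type*} [MeasurableSpace X] (m : Measure X)
    (S : ι → Set X) (f : X → ℝ≥0∞) (x : X) : ℝ≥0∞ :=
  ⨆ i, Set.indicator (S i) (fun _ => (∫⁻ y in S i, f y ∂m) / m (S i)) x

lemma selection {ι X : Type*} (s : ι → Set X)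
    (hnest : ∀ i j, s i ⊆ s j ∨ s j ⊆ s i ∨ Disjoint (s i) (s j)) (F : Finset ι) :
    ∃ G : Finset ι, G ⊆ F ∧ (⋃ i ∈ G, s i) = (⋃ i ∈ F, s i) ∧
      (G : Set ι).PairwiseDisjoint s := by
  classical
  induction F using Finset.induction_on with
  | empty => exact ⟨∅, by simp, by simp, by simp⟩
  | @insert a F haF ih =>
    obtain ⟨G, hGF, hGU, hGd⟩ := ih
    by_cases h : ∃ j ∈ G, s a ⊆ s j
    · obtain ⟨j, hjG, hj⟩ := h
      refine ⟨G, hGF.trans (Finset.subset_insert a F), ?_, hGd⟩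
      rw [Finset.set_biUnion_insert, ← hGU]
      exact (union_eq_self_of_subset_left (hj.trans (Set.subset_biUnion_of_mem hjG))).symm
    · push_neg at h
      set G' := G.filter (fun j => ¬ s j ⊆ s a) with hG'
      have haG : a ∉ G := fun haG => h a haG (subset_refl _)
      refine ⟨insert a G', Finset.insert_subset_insert a
        ((Finset.filter_subset _ _).trans hGF), ?_, ?_⟩
      · rw [Finset.set_biUnion_insert, Finset.set_biUnion_insert, ← hGU]
        apply subset_antisymm
        · exact union_subset_union_right _
            (Set.biUnion_subset_biUnion_left (Finset.filter_subset _ _))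
        · rintro x (hx | hx)
          · exact Or.inl hx
          · simp only [mem_iUnion, exists_prop] at hx
            obtain ⟨j, hjG, hxj⟩ := hx
            by_cases hja : s j ⊆ s a
            · exact Or.inl (hja hxj)
            · exact Or.inr (mem_biUnion (Finset.mem_filter.mpr ⟨hjG, hja⟩) hxj)
      · rw [Finset.coe_insert]
        refine Set.PairwiseDisjoint.insert (hGd.subset ?_) ?_
        · exact_mod_cast Finset.filter_subset _ _
        · intro j hj hne
          simp only [hG', Finset.coe_filter, mem_setOf_eq] at hj
          rcases hnest a j with hc | hc | hc
          · exact absurd hc (h j hj.1)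
          · exact absurd hc hj.2
          · exact hc

lemma weakW {X ι : Type*} [MeasurableSpace X] [Countable ι] (m : Measure X)
    (S : ι → Set X) (hSmeas : ∀ i, MeasurableSet (S i))
    (hvol : ∀ i, 0 < m (S i) ∧ m (S i) < ∞)
    (hnest : ∀ i j, S i ⊆ S j ∨ S j ⊆ S i ∨ Disjoint (S i) (S j))
    (f : X → ℝ≥0∞) (c : ℝ≥0∞) :
    c * m {x | c < maxW m S f x} ≤ ∫⁻ x in {x | c < maxW m S f x}, f x ∂m := by
  classical
  set avg := fun i => (∫⁻ y in S i, f y ∂m) / m (S i) with havg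
  set E := {x | c < maxW m S f x} with hE
  have hmem : ∀ x, x ∈ E ↔ ∃ i, x ∈ S i ∧ c < avg i := by
    intro x
    simp only [hE, maxW, mem_setOf_eq, lt_iSup_iff]
    constructor
    · rintro ⟨i, hi⟩
      by_cases hx : x ∈ S i
      · rw [Set.indicator_of_mem hx] at hi; exact ⟨i, hx, hi⟩
      · rw [Set.indicator_of_notMem hx] at hi; exact absurd hi (by simp)
    · rintro ⟨i, hx, hi⟩; exact ⟨i, by rwa [Set.indicator_of_mem hx]⟩
  set s := fun i => if c < avg i then S i else (∅ : Set X) with hs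
  have hsub : ∀ i, s i ⊆ E := by
    intro i x hx
    simp only [hs] at hx
    split_ifs at hx with hci
    · exact (hmem x).mpr ⟨i, hx, hci⟩
    · exact absurd hx (notMem_empty x)
  have hsm : ∀ i, MeasurableSet (s i) := by
    intro i; simp only [hs]; split_ifs
    · exact hSmeas i
    · exact MeasurableSet.empty
  have hsE : E = ⋃ i, s i := by
    ext x
    simp only [mem_iUnion, hmem x, hs]
    constructor
    · rintro ⟨i, hx, hci⟩; exact ⟨i, by simp [if_pos hci, hx]⟩
    · rintro ⟨i, hx⟩
      split_ifs at hx with hci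
      · exact ⟨i, hx, hci⟩
      · exact absurd hx (notMem_empty x)
  have hnest' : ∀ i j, s i ⊆ s j ∨ s j ⊆ s i ∨ Disjoint (s i) (s j) := by
    intro i j
    simp only [hs]
    split_ifs
    · exact hnest i j
    · exact Or.inr (Or.inl (empty_subset _))
    · exact Or.inl (empty_subset _)
    · exact Or.inl (subset_refl _)
  have key : ∀ F : Finset ι, c * m (⋃ i ∈ F, s i) ≤ ∫⁻ x in E, f x ∂m := by
    intro F
    obtain ⟨G, hGF, hGU, hGd⟩ := selection s hnest' F
    rw [← hGU, measure_biUnion_finset hGd (fun i _ => hsm i), Finset.mul_sum]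
    have step : ∀ i ∈ G, c * m (s i) ≤ ∫⁻ x in s i, f x ∂m := by
      intro i _
      by_cases hci : c < avg i
      · simp only [hs, if_pos hci]
        have := (ENNReal.lt_div_iff_mul_lt (Or.inl (hvol i).1.ne')
          (Or.inl (hvol i).2.ne)).mp hci
        exact this.le
      · simp [hs, if_neg hci]
    calc ∑ i ∈ G, c * m (s i) ≤ ∑ i ∈ G, ∫⁻ x in s i, f x ∂m := Finset.sum_le_sum step
    _ = ∫⁻ x in ⋃ i ∈ G, s i, f x ∂m :=
        (lintegral_biUnion_finset hGd (fun i _ => hsm i) f).symm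
    _ ≤ ∫⁻ x in E, f x ∂m := by
        refine lintegral_mono_set (iUnion₂_subset fun i _ => hsub i)
  have hdir : Directed (· ⊆ ·) (fun F : Finset ι => ⋃ i ∈ F, s i) := by
    intro F₁ F₂
    exact ⟨F₁ ∪ F₂, Set.biUnion_subset_biUnion_left (Finset.subset_union_left),
      Set.biUnion_subset_biUnion_left (Finset.subset_union_right)⟩
  have hme : m E = ⨆ F : Finset ι, m (⋃ i ∈ F, s i) := by
    rw [hsE, Set.iUnion_eq_iUnion_finset s, Directed.measure_iUnion hdir]
  rw [hme, ENNReal.mul_iSup]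
  exact iSup_le key

lemma CL {X ι : Type*} [MeasurableSpace X] [Countable ι] (m : Measure X)
    (S : ι → Set X) (hSmeas : ∀ i, MeasurableSet (S i))
    (hvol : ∀ i, 0 < m (S i) ∧ m (S i) < ∞)
    (hnest : ∀ i j, S i ⊆ S j ∨ S j ⊆ S i ∨ Disjoint (S i) (S j))
    (f : X → ℝ≥0∞) (hf : Measurable f) {p : ℝ} (hp : 1 < p)
    (hA : ∫⁻ x, (maxW m S f x) ^ p ∂m ≠ ∞) :
    (∫⁻ x, (maxW m S f x) ^ p ∂m) ^ (1 / p) ≤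
      ENNReal.ofReal (p / (p - 1)) * (∫⁻ x, f x ^ p ∂m) ^ (1 / p) := by
  have hp0 : (0:ℝ) < p := lt_trans one_pos hp
  have hp1 : (0:ℝ) < p - 1 := by linarith
  set M := maxW m S f with hMdef
  have hMm : Measurable M :=
    Measurable.iSup fun i => Measurable.indicator measurable_const (hSmeas i)
  set ν := m.withDensity f with hν
  set A := ∫⁻ x, M x ^ p ∂m with hAdef
  set I := ∫⁻ x, f x ^ p ∂m with hIdef
  set c := ENNReal.ofReal (p / (p - 1)) with hc
  set X' := ∫⁻ t in Ioi (0:ℝ), ν {a | ENNReal.ofReal t < M a} * ENNReal.ofReal (t ^ (p-2))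
    with hX'
  -- step 1 : A ≤ ofReal p * X'
  have step1 : A ≤ ENNReal.ofReal p * X' := by
    rw [hAdef, layercakeE m hMm hp0]
    refine mul_le_mul_right ?_ _
    refine lintegral_mono_ae ?_
    filter_upwards [self_mem_ae_restrict (measurableSet_Ioi : MeasurableSet (Ioi (0:ℝ)))]
      with t ht
    have hE : MeasurableSet {a | ENNReal.ofReal t < M a} :=
      measurableSet_lt measurable_const hMm
    have hνE : ν {a | ENNReal.ofReal t < M a} =
        ∫⁻ x in {a | ENNReal.ofReal t < M a}, f x ∂m := withDensity_apply f hE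
    have hwk := weakW m S hSmeas hvol hnest f (ENNReal.ofReal t)
    have tsplit : ENNReal.ofReal (t ^ (p-1)) =
        ENNReal.ofReal t * ENNReal.ofReal (t ^ (p-2)) := by
      rw [← ENNReal.ofReal_mul (le_of_lt ht)]
      congr 1
      rw [← Real.rpow_one_add' (le_of_lt ht) (by linarith)]
      ring_nf
    rw [tsplit, ← mul_assoc, hνE]
    exact mul_le_mul_left (by rw [mul_comm]; exact hwk) _
  -- step 2 : relate X' to B := ∫ M^{p-1} dν
  set B := ∫⁻ x, M x ^ (p-1) ∂ν with hB
  have LB : B = ENNReal.ofReal (p-1) * X' := by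
    rw [hB, layercakeE ν hMm hp1]
    congr 2
    ring
  have step2 : A ≤ c * B := by
    calc A ≤ ENNReal.ofReal p * X' := step1
    _ = c * (ENNReal.ofReal (p-1) * X') := by
        rw [← mul_assoc, hc, ← ENNReal.ofReal_mul (by positivity),
          div_mul_cancel₀ _ hp1.ne']
    _ = c * B := by rw [← LB]
  -- rewrite B over m and apply Hölder
  have hBm : B = ∫⁻ x, f x * M x ^ (p-1) ∂m := by
    rw [hB, hν, lintegral_withDensity_eq_lintegral_mul m hf (hMm.pow_const _)]
    rfl
  have hconj : p.HolderConjugate (p / (p-1)) := Real.HolderConjugate.conjExponent hp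
  have hMsimp : ∀ x : X, (M x ^ (p-1)) ^ (p/(p-1)) = M x ^ p := by
    intro x
    rw [← ENNReal.rpow_mul]
    congr 1
    field_simp
  have hold : B ≤ I ^ (1/p) * A ^ (1/(p/(p-1))) := by
    rw [hBm]
    have := ENNReal.lintegral_mul_le_Lp_mul_Lq m hconj hf.aemeasurable
      (AEMeasurable.pow_const hMm.aemeasurable (p-1))
    simp_rw [hMsimp] at this
    exact this
  set e := 1/(p/(p-1)) with he
  have he' : 1/p + e = 1 := by
    rw [he]; field_simp; ring
  have he0 : 0 ≤ e := by positivity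
  -- final algebra
  by_cases hA0 : A = 0
  · rw [hA0, ENNReal.zero_rpow_of_pos (by positivity)]
    exact zero_le
  have hAe0 : A ^ e ≠ 0 := (ENNReal.rpow_pos (pos_iff_ne_zero.mpr hA0) hA).ne'
  have hAet : A ^ e ≠ ∞ := ENNReal.rpow_ne_top_of_nonneg he0 hA
  have final : A ^ (1/p) * A ^ e ≤ (c * I ^ (1/p)) * A ^ e := by
    calc A ^ (1/p) * A ^ e = A := by
          rw [← ENNReal.rpow_add _ _ hA0 hA, he', ENNReal.rpow_one]
    _ ≤ c * B := step2
    _ ≤ c * (I ^ (1/p) * A ^ e) := mul_le_mul_right hold _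
    _ = (c * I ^ (1/p)) * A ^ e := by rw [mul_assoc]
  exact (ENNReal.mul_le_mul_iff_left hAe0 hAet).mp final

lemma crude {X ι : Type*} [MeasurableSpace X] [Fintype ι] (m : Measure X)
    (S : ι → Set X) (hSmeas : ∀ i, MeasurableSet (S i))
    (hvol : ∀ i, 0 < m (S i) ∧ m (S i) < ∞)
    (f : X → ℝ≥0∞) (hf : Measurable f) {p : ℝ} (hp : 1 < p)
    (hI : ∫⁻ x, f x ^ p ∂m ≠ ∞) :
    ∫⁻ x, (maxW m S f x) ^ p ∂m ≠ ∞ := by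
  have hp0 : (0:ℝ) < p := lt_trans one_pos hp
  have hconj : p.HolderConjugate (p / (p-1)) := Real.HolderConjugate.conjExponent hp
  have hfin : ∀ i, ∫⁻ y in S i, f y ∂m < ∞ := by
    intro i
    have hold := ENNReal.lintegral_mul_le_Lp_mul_Lq (m.restrict (S i)) hconj
      hf.aemeasurable (aemeasurable_const (b := (1:ℝ≥0∞)))
    have h1 : ∫⁻ y in S i, f y ∂m = ∫⁻ y in S i, f y * 1 ∂m := by simp
    rw [h1]
    refine lt_of_le_of_lt hold ?_
    apply ENNReal.mul_lt_top
    · refine ENNReal.rpow_lt_top_of_nonneg (one_div_nonneg.mpr hp0.le) ?_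
      exact ((setLIntegral_le_lintegral _ _).trans_lt (lt_top_iff_ne_top.mpr hI)).ne
    · have : ∫⁻ y in S i, (1:ℝ≥0∞) ^ (p/(p-1)) ∂m = m (S i) := by
        simp
      rw [this]
      have hq0 : (0:ℝ) < p/(p-1) := div_pos hp0 (by linarith)
      exact ENNReal.rpow_lt_top_of_nonneg (one_div_nonneg.mpr hq0.le) (hvol i).2.ne
  have hpt : ∀ x, (maxW m S f x) ^ p ≤
      ∑ i, (Set.indicator (S i) (fun _ => (∫⁻ y in S i, f y ∂m) / m (S i)) x) ^ p := by
    intro x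
    rw [maxW, iSup_rpow' _ hp0]
    exact iSup_le fun i => Finset.single_le_sum
      (f := fun i => (Set.indicator (S i) (fun _ => (∫⁻ y in S i, f y ∂m) / m (S i)) x) ^ p)
      (fun i _ => zero_le) (Finset.mem_univ i)
  have hbd := lintegral_mono (μ := m) hpt
  refine (lt_of_le_of_lt hbd ?_).ne
  rw [lintegral_finset_sum]
  swap
  · exact fun i _ => (Measurable.indicator measurable_const (hSmeas i)).pow_const p
  refine ENNReal.sum_lt_top.mpr fun i _ => ?_
  have hind : ∀ x, (Set.indicator (S i) (fun _ => (∫⁻ y in S i, f y ∂m) / m (S i)) x) ^ p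
      = Set.indicator (S i) (fun _ => ((∫⁻ y in S i, f y ∂m) / m (S i)) ^ p) x := by
    intro x
    by_cases hx : x ∈ S i
    · simp [Set.indicator_of_mem hx]
    · simp [Set.indicator_of_notMem hx, ENNReal.zero_rpow_of_pos hp0]
  simp_rw [hind]
  rw [lintegral_indicator (hSmeas i), setLIntegral_const]
  apply ENNReal.mul_lt_top
  · refine ENNReal.rpow_lt_top_of_nonneg hp0.le ?_
    exact (ENNReal.div_lt_top (hfin i).ne (hvol i).1.ne').ne
  · exact (hvol i).2

/-- The weighted dyadic maximal function is bounded on `L^p(σ)` with norm at most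
`p' = p/(p-1)` for `1 < p < ∞`, and on `L^∞(σ)` with norm `1`, independently of
the weight. -/
theorem stmt16 {X ι : Type*} [MeasurableSpace X] [Countable ι] (m : Measure X)
    (S : ι → Set X) (hSmeas : ∀ i, MeasurableSet (S i))
    (hvol : ∀ i, 0 < m (S i) ∧ m (S i) < ∞)
    (hnest : ∀ i j, S i ⊆ S j ∨ S j ⊆ S i ∨ Disjoint (S i) (S j))
    (f : X → ℝ≥0∞) (hf : Measurable f) :
    (∀ p : ℝ, 1 < p →
      (∫⁻ x, (maxW m S f x) ^ p ∂m) ^ (1 / p) ≤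
        ENNReal.ofReal (p / (p - 1)) * (∫⁻ x, f x ^ p ∂m) ^ (1 / p)) ∧
    essSup (maxW m S f) m ≤ essSup f m := by
  constructor
  · intro p hp
    have hp0 : (0:ℝ) < p := lt_trans one_pos hp
    by_cases hI : ∫⁻ x, f x ^ p ∂m = ∞
    · rw [hI, ENNReal.top_rpow_of_pos (by positivity), ENNReal.mul_top
        (ENNReal.ofReal_pos.mpr (div_pos hp0 (by linarith))).ne']
      exact le_top
    rcases isEmpty_or_nonempty ι with hι | hι
    · have hz : maxW m S f = fun _ => 0 := by
        funext x; rw [maxW]; exact iSup_of_empty _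
      rw [hz]
      simp only [ENNReal.zero_rpow_of_pos hp0, lintegral_zero]
      rw [ENNReal.zero_rpow_of_pos (by positivity)]
      exact zero_le
    · classical
      obtain ⟨e, he⟩ := exists_surjective_nat ι
      set Fn : ℕ → Finset ι := fun n => (Finset.range n).image e with hFn
      have hFnmono : Monotone Fn := fun a b hab => by
        simp only [hFn]
        exact Finset.image_subset_image (Finset.range_subset_range.mpr hab)
      set Mn : ℕ → X → ℝ≥0∞ := fun n => maxW m (fun j : {i // i ∈ Fn n} => S j.1) f with hMn
      have hMnm : ∀ n, Measurable (Mn n) := fun n =>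
        Measurable.iSup fun j => Measurable.indicator measurable_const (hSmeas j.1)
      have hMnmono : Monotone Mn := by
        intro a b hab x
        refine iSup_le fun j => ?_
        exact le_iSup (fun j : {i // i ∈ Fn b} =>
          Set.indicator (S j.1) (fun _ => (∫⁻ y in S j.1, f y ∂m) / m (S j.1)) x)
          ⟨j.1, hFnmono hab j.2⟩
      have hsup : ∀ x, maxW m S f x = ⨆ n, Mn n x := by
        intro x
        apply le_antisymm
        · refine iSup_le fun i => ?_
          obtain ⟨k, rfl⟩ := he i
          have hmem : e k ∈ Fn (k+1) :=
            Finset.mem_image.mpr ⟨k, Finset.mem_range.mpr (Nat.lt_succ_self k), rfl⟩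
          refine le_trans ?_ (le_iSup (fun n => Mn n x) (k+1))
          exact le_iSup (fun j : {i // i ∈ Fn (k+1)} =>
            Set.indicator (S j.1) (fun _ => (∫⁻ y in S j.1, f y ∂m) / m (S j.1)) x)
            ⟨e k, hmem⟩
        · exact iSup_le fun n => iSup_le fun j =>
            le_iSup (fun i => Set.indicator (S i)
              (fun _ => (∫⁻ y in S i, f y ∂m) / m (S i)) x) j.1
      have hAeq : ∫⁻ x, (maxW m S f x)^p ∂m = ⨆ n, ∫⁻ x, (Mn n x)^p ∂m := by
        rw [← lintegral_iSup (fun n => (hMnm n).pow_const p)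
          (fun a b hab x => ENNReal.rpow_le_rpow (hMnmono hab x) hp0.le)]
        refine lintegral_congr fun x => ?_
        rw [hsup x, iSup_rpow' _ hp0]
      have hbound : ∀ n, ∫⁻ x, (Mn n x)^p ∂m ≤
          (ENNReal.ofReal (p/(p-1)) * (∫⁻ x, f x ^ p ∂m)^(1/p))^p := by
        intro n
        have hcl := CL m (fun j : {i // i ∈ Fn n} => S j.1) (fun j => hSmeas j.1)
          (fun j => hvol j.1) (fun j k => hnest j.1 k.1) f hf hp
          (crude m (fun j : {i // i ∈ Fn n} => S j.1) (fun j => hSmeas j.1) (fun j => hvol j.1) f hf hp hI)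
        have h2 := ENNReal.rpow_le_rpow hcl hp0.le
        rwa [← ENNReal.rpow_mul, one_div_mul_cancel hp0.ne', ENNReal.rpow_one] at h2
      calc (∫⁻ x, (maxW m S f x)^p ∂m)^(1/p)
          ≤ ((ENNReal.ofReal (p/(p-1)) * (∫⁻ x, f x^p ∂m)^(1/p))^p)^(1/p) := by
            apply ENNReal.rpow_le_rpow _ (by positivity)
            rw [hAeq]; exact iSup_le hbound
      _ = _ := by rw [← ENNReal.rpow_mul, mul_one_div_cancel hp0.ne', ENNReal.rpow_one]
  · refine essSup_le_of_ae_le _ (Filter.Eventually.of_forall fun x => ?_)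
    refine iSup_le fun i => ?_
    have h1 : (∫⁻ y in S i, f y ∂m) ≤ essSup f m * m (S i) := by
      calc ∫⁻ y in S i, f y ∂m ≤ ∫⁻ _ in S i, essSup f m ∂m :=
            lintegral_mono_ae (ae_restrict_of_ae (ae_le_essSup f))
      _ = essSup f m * m (S i) := setLIntegral_const _ _
    have h2 : (∫⁻ y in S i, f y ∂m) / m (S i) ≤ essSup f m :=
      (ENNReal.div_le_iff (hvol i).1.ne' (hvol i).2.ne).mpr h1
    refine le_trans ?_ h2
    by_cases hx : x ∈ S i
    · rw [Set.indicator_of_mem hx]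
    · rw [Set.indicator_of_notMem hx]; exact zero_le
end
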